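/- arXiv:2304.12967 — 10 statements merged into one kernel-verified Lean document; each statement's English description precedes it below -/
import Mathlib

section
/- (Monotonicity of independence) Let S' ⊆ S ⊆ [n]. If S is independent, then S' is independent. -/
open Finset

/-- A set `S` is independent if `γ S = ∑ i ∈ S, p i`. -/
def AoNIndep {n : ℕ} (γ : Finset (Fin n) → ℕ) (p : Fin n → ℕ) (S : Finset (Fin n)) : Prop :=
  γ S = ∑ i ∈ S, p i

theorem indep_monotone {n : ℕ} (γ : Finset (Fin n) → ℕ) (p : Fin n → ℕ)
    (hp : ∀ i, 1 ≤ p i)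
    (hγ0 : γ ∅ = 0)
    (hmono : ∀ S T : Finset (Fin n), S ⊆ T → γ S ≤ γ T)
    (hsub : ∀ S T : Finset (Fin n), S ⊆ T → ∀ i : Fin n,
      γ (insert i S) + γ T ≥ γ (insert i T) + γ S)
    (haon : ∀ (i : Fin n) (S : Finset (Fin n)),
      γ (insert i S) = γ S ∨ γ (insert i S) = γ S + p i)
    (S' S : Finset (Fin n)) (hSS : S' ⊆ S) (hS : AoNIndep γ p S) :
    AoNIndep γ p S' := by
  -- Step 1: γ T ≤ ∑ i ∈ T, p i for all T
  have hupper : ∀ T : Finset (Fin n), γ T ≤ ∑ i ∈ T, p i := by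
    intro T
    induction T using Finset.induction_on with
    | empty => simp [hγ0]
    | @insert i T h ih =>
      rw [Finset.sum_insert h]
      rcases haon i T with h1 | h1 <;> omega
  -- Step 2: γ (A ∪ B) ≤ γ A + ∑ i ∈ B, p i
  have hstep : ∀ A B : Finset (Fin n), γ (A ∪ B) ≤ γ A + ∑ i ∈ B, p i := by
    intro A B
    induction B using Finset.induction_on with
    | empty => simp
    | @insert i T h ih =>
      rw [Finset.union_insert, Finset.sum_insert h]
      rcases haon i (A ∪ T) with h1 | h1 <;> omega
  have h1 := hstep S' (S \ S')
  rw [Finset.union_sdiff_of_subset hSS] at h1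
  have h2 : ∑ i ∈ S, p i = ∑ i ∈ S', p i + ∑ i ∈ S \ S', p i := by
    rw [← Finset.sum_union Finset.disjoint_sdiff, Finset.union_sdiff_of_subset hSS]
  have h3 := hupper S'
  unfold AoNIndep at *
  omega
end

section
/- Let C be a cycle. Then all items of C have the same profit, i.e., p_i = p_j for all i, j ∈ C. -/
open Finset

/-- A cycle is a nonempty dependent set all of whose one-element deletions
are independent. -/
def AoNCycle {n : ℕ} (γ : Finset (Fin n) → ℕ) (p : Fin n → ℕ) (C : Finset (Fin n)) : Prop :=
  C.Nonempty ∧ ¬ AoNIndep γ p C ∧ ∀ i ∈ C, AoNIndep γ p (C.erase i)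

theorem cycle_equal_profits {n : ℕ} (γ : Finset (Fin n) → ℕ) (p : Fin n → ℕ)
    (hp : ∀ i, 1 ≤ p i)
    (hγ0 : γ ∅ = 0)
    (hmono : ∀ S T : Finset (Fin n), S ⊆ T → γ S ≤ γ T)
    (hsub : ∀ S T : Finset (Fin n), S ⊆ T → ∀ i : Fin n,
      γ (insert i S) + γ T ≥ γ (insert i T) + γ S)
    (haon : ∀ (i : Fin n) (S : Finset (Fin n)),
      γ (insert i S) = γ S ∨ γ (insert i S) = γ S + p i)
    (C : Finset (Fin n)) (hC : AoNCycle γ p C) :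
    ∀ i ∈ C, ∀ j ∈ C, p i = p j := by
  obtain ⟨hne, hdep, hind⟩ := hC
  have key : ∀ i ∈ C, γ C + p i = ∑ k ∈ C, p k := by
    intro i hi
    have h1 : insert i (C.erase i) = C := Finset.insert_erase hi
    have h2 := haon i (C.erase i)
    rw [h1] at h2
    have h3 : γ (C.erase i) = ∑ k ∈ C.erase i, p k := hind i hi
    have hsum : ∑ k ∈ C.erase i, p k + p i = ∑ k ∈ C, p k :=
      Finset.sum_erase_add _ _ hi
    rcases h2 with h | h
    · rw [h, h3, hsum]
    · exact absurd (by rw [AoNIndep, h, h3, hsum]) hdep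
  intro i hi j hj
  have h := (key i hi).trans (key j hj).symm
  omega
end

section
/- Assume every singleton {i}, i ∈ [n], is independent. If S ⊆ [n] is dependent, then there exists a dependent subset S' ⊆ S all of whose items have the same profit, i.e., p_i = p_j for all i, j ∈ S'. -/
open Finset

theorem dependent_contains_equal_profit_dependent {n : ℕ}
    (γ : Finset (Fin n) → ℕ) (p : Fin n → ℕ)
    (hp : ∀ i, 1 ≤ p i)
    (hγ0 : γ ∅ = 0)
    (hmono : ∀ S T : Finset (Fin n), S ⊆ T → γ S ≤ γ T)
    (hsub : ∀ S T : Finset (Fin n), S ⊆ T → ∀ i : Fin n,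
      γ (insert i S) + γ T ≥ γ (insert i T) + γ S)
    (haon : ∀ (i : Fin n) (S : Finset (Fin n)),
      γ (insert i S) = γ S ∨ γ (insert i S) = γ S + p i)
    (hsingle : ∀ i : Fin n, AoNIndep γ p {i})
    (S : Finset (Fin n)) (hS : ¬ AoNIndep γ p S) :
    ∃ S' ⊆ S, ¬ AoNIndep γ p S' ∧ ∀ i ∈ S', ∀ j ∈ S', p i = p j := by
  classical
  induction S using Finset.strongInduction with
  | _ S ih =>
    by_cases h : ∃ T ⊂ S, ¬ AoNIndep γ p T
    · obtain ⟨T, hTS, hT⟩ := h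
      obtain ⟨S', hS'T, h1, h2⟩ := ih T hTS hT
      exact ⟨S', hS'T.trans hTS.subset, h1, h2⟩
    · push_neg at h
      refine ⟨S, Finset.Subset.refl S, hS, ?_⟩
      intro i hi j hj
      have key : ∀ k ∈ S, γ S + p k = ∑ x ∈ S, p x := by
        intro k hk
        have herase : AoNIndep γ p (S.erase k) := h _ (Finset.erase_ssubset hk)
        unfold AoNIndep at herase
        have hins : insert k (S.erase k) = S := Finset.insert_erase hk
        rcases haon k (S.erase k) with hcase | hcase <;> rw [hins] at hcase
        · rw [hcase, herase]
          exact Finset.sum_erase_add _ _ hk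
        · exfalso
          apply hS
          unfold AoNIndep
          rw [hcase, herase]
          exact Finset.sum_erase_add _ _ hk
      have := (key i hi).trans (key j hj).symm
      omega
end

section
/- (Independence of the union of independent slices) Assume every singleton {i}, i ∈ [n], is independent. Then a set S ⊆ [n] is independent if and only if, for every profit value q ∈ ℕ, the slice {i ∈ S : p_i = q} is independent. -/
open Finset

section Aux

variable {n : ℕ} (γ : Finset (Fin n) → ℕ) (p : Fin n → ℕ)

lemma aon_union_bound (hγ0 : γ ∅ = 0)
    (haon : ∀ (i : Fin n) (S : Finset (Fin n)),
      γ (insert i S) = γ S ∨ γ (insert i S) = γ S + p i)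
    (A T : Finset (Fin n)) : γ (T ∪ A) ≤ γ T + ∑ i ∈ A, p i := by
  induction A using Finset.induction with
  | empty => simp
  | @insert a A ha ih =>
    have h1 : T ∪ insert a A = insert a (T ∪ A) := by
      ext x; simp [or_comm, or_assoc, or_left_comm]
    rw [h1, Finset.sum_insert ha]
    rcases haon a (T ∪ A) with h | h <;> omega

lemma aon_subset_indep (hγ0 : γ ∅ = 0)
    (haon : ∀ (i : Fin n) (S : Finset (Fin n)),
      γ (insert i S) = γ S ∨ γ (insert i S) = γ S + p i)
    {T S : Finset (Fin n)} (hTS : T ⊆ S) (hS : AoNIndep γ p S) : AoNIndep γ p T := by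
  have h1 : γ (T ∪ (S \ T)) ≤ γ T + ∑ i ∈ S \ T, p i :=
    aon_union_bound γ p hγ0 haon _ _
  have h2 : T ∪ (S \ T) = S := Finset.union_sdiff_of_subset hTS
  have h3 : γ ((∅ : Finset (Fin n)) ∪ T) ≤ γ ∅ + ∑ i ∈ T, p i :=
    aon_union_bound γ p hγ0 haon _ _
  rw [Finset.empty_union, hγ0] at h3
  have h4 : ∑ i ∈ S \ T, p i + ∑ i ∈ T, p i = ∑ i ∈ S, p i :=
    Finset.sum_sdiff hTS
  rw [h2] at h1
  unfold AoNIndep at hS ⊢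
  omega

lemma aon_exists_circuit (hp : ∀ i, 1 ≤ p i) (hγ0 : γ ∅ = 0)
    (haon : ∀ (i : Fin n) (S : Finset (Fin n)),
      γ (insert i S) = γ S ∨ γ (insert i S) = γ S + p i)
    (U : Finset (Fin n)) : AoNIndep γ p U → ∀ i : Fin n, γ (insert i U) = γ U →
      ∃ R ⊆ U, (∀ j ∈ R, p j = p i) ∧ γ (insert i R) = γ R := by
  induction U using Finset.strongInduction with
  | _ U ih =>
    intro hU i h0
    by_cases hex : ∃ j ∈ U, γ (insert i (U.erase j)) = γ (U.erase j)
    · obtain ⟨j, hj, hje⟩ := hex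
      obtain ⟨R, hR, h1, h2⟩ := ih (U.erase j) (Finset.erase_ssubset hj)
        (aon_subset_indep γ p hγ0 haon (Finset.erase_subset _ _) hU) i hje
      exact ⟨R, hR.trans (Finset.erase_subset _ _), h1, h2⟩
    · push_neg at hex
      refine ⟨U, subset_rfl, ?_, h0⟩
      intro j hj
      have h1 : γ (insert i (U.erase j)) = γ (U.erase j) + p i := by
        rcases haon i (U.erase j) with h | h
        · exact absurd h (hex j hj)
        · exact h
      have hins : insert j (insert i (U.erase j)) = insert i U := by
        rw [Finset.insert_comm, Finset.insert_erase hj]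
      have h2 := haon j (insert i (U.erase j))
      rw [hins, h0] at h2
      have hUe : AoNIndep γ p (U.erase j) :=
        aon_subset_indep γ p hγ0 haon (Finset.erase_subset _ _) hU
      have hsum : γ U = γ (U.erase j) + p j := by
        rw [hU, hUe]; exact (Finset.sum_erase_add _ _ hj).symm
      have hpi := hp i
      have hpj := hp j
      omega

end Aux

theorem indep_iff_slices_indep {n : ℕ} (γ : Finset (Fin n) → ℕ) (p : Fin n → ℕ)
    (hp : ∀ i, 1 ≤ p i)
    (hγ0 : γ ∅ = 0)
    (hmono : ∀ S T : Finset (Fin n), S ⊆ T → γ S ≤ γ T)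
    (hsub : ∀ S T : Finset (Fin n), S ⊆ T → ∀ i : Fin n,
      γ (insert i S) + γ T ≥ γ (insert i T) + γ S)
    (haon : ∀ (i : Fin n) (S : Finset (Fin n)),
      γ (insert i S) = γ S ∨ γ (insert i S) = γ S + p i)
    (hsingle : ∀ i : Fin n, AoNIndep γ p {i})
    (S : Finset (Fin n)) :
    AoNIndep γ p S ↔ ∀ q : ℕ, AoNIndep γ p (S.filter (fun i => p i = q)) := by
  constructor
  · intro hS q
    exact aon_subset_indep γ p hγ0 haon (Finset.filter_subset _ _) hS
  · induction S using Finset.strongInduction with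
    | _ S ih =>
      intro hq
      rcases Finset.eq_empty_or_nonempty S with rfl | ⟨i, hi⟩
      · simpa [AoNIndep] using hγ0
      · have hUe : AoNIndep γ p (S.erase i) := by
          apply ih (S.erase i) (Finset.erase_ssubset hi)
          intro q
          exact aon_subset_indep γ p hγ0 haon
            (Finset.filter_subset_filter _ (Finset.erase_subset _ _)) (hq q)
        have hins : insert i (S.erase i) = S := Finset.insert_erase hi
        rcases haon i (S.erase i) with h | h
        · -- marginal 0 : contradiction
          exfalso
          obtain ⟨R, hR, hRp, hRγ⟩ :=
            aon_exists_circuit γ p hp hγ0 haon (S.erase i) hUe i h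
          have hRi : insert i R ⊆ S.filter (fun j => p j = p i) := by
            intro x hx
            rw [Finset.mem_insert] at hx
            rcases hx with rfl | hx
            · exact Finset.mem_filter.mpr ⟨hi, rfl⟩
            · exact Finset.mem_filter.mpr
                ⟨Finset.erase_subset _ _ (hR hx), hRp x hx⟩
          have hRindep : AoNIndep γ p (insert i R) :=
            aon_subset_indep γ p hγ0 haon hRi (hq (p i))
          have hRindep' : AoNIndep γ p R :=
            aon_subset_indep γ p hγ0 haon (Finset.subset_insert _ _) hRindep
          have hiR : i ∉ R := fun hiR =>
            Finset.notMem_erase i S (hR hiR)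
          have hsumR : ∑ j ∈ insert i R, p j = p i + ∑ j ∈ R, p j :=
            Finset.sum_insert hiR
          have hpi := hp i
          unfold AoNIndep at hRindep hRindep'
          omega
        · unfold AoNIndep at hUe ⊢
          rw [← hins, h, hUe, Finset.sum_insert (Finset.notMem_erase i S)]
          omega
end

section
/- (Matroid exchange within a profit class) Let S, S' ⊆ [n] be independent sets all of whose items have the same profit q (i.e., p_i = q for every i ∈ S ∪ S'). If |S| > |S'|, then there exists j ∈ S \ S' such that S' ∪ {j} is independent. -/
open Finset

theorem exchange_within_profit_class {n : ℕ} (γ : Finset (Fin n) → ℕ) (p : Fin n → ℕ)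
    (hp : ∀ i, 1 ≤ p i)
    (hγ0 : γ ∅ = 0)
    (hmono : ∀ S T : Finset (Fin n), S ⊆ T → γ S ≤ γ T)
    (hsub : ∀ S T : Finset (Fin n), S ⊆ T → ∀ i : Fin n,
      γ (insert i S) + γ T ≥ γ (insert i T) + γ S)
    (haon : ∀ (i : Fin n) (S : Finset (Fin n)),
      γ (insert i S) = γ S ∨ γ (insert i S) = γ S + p i)
    (q : ℕ) (S S' : Finset (Fin n))
    (hS : AoNIndep γ p S) (hS' : AoNIndep γ p S')
    (hq : ∀ i ∈ S ∪ S', p i = q)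
    (hcard : S'.card < S.card) :
    ∃ j ∈ S \ S', AoNIndep γ p (insert j S') := by
  by_contra hcon
  push_neg at hcon
  -- every j in S \ S' has zero marginal on S'
  have hzero : ∀ j ∈ S \ S', γ (insert j S') = γ S' := by
    intro j hj
    rcases haon j S' with h | h
    · exact h
    · exfalso
      apply hcon j hj
      have hjS' : j ∉ S' := (mem_sdiff.mp hj).2
      unfold AoNIndep
      rw [h, hS', Finset.sum_insert hjS']
      ring
  -- zero marginal persists to supersets
  have hpersist : ∀ (A B : Finset (Fin n)), A ⊆ B → ∀ j, γ (insert j A) = γ A →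
      γ (insert j B) = γ B := by
    intro A B hAB j hjA
    have h1 := hsub A B hAB j
    rw [hjA] at h1
    have h2 : γ (insert j B) ≤ γ B := by omega
    exact le_antisymm h2 (hmono B (insert j B) (subset_insert j B))
  -- γ (S' ∪ T) = γ S' for T ⊆ S \ S'
  have hkey : ∀ T : Finset (Fin n), T ⊆ S \ S' → γ (S' ∪ T) = γ S' := by
    intro T
    induction T using Finset.induction with
    | empty => intro _; simp
    | @insert j T hjT ih =>
      intro hsub'
      have hjmem : j ∈ S \ S' := hsub' (mem_insert_self j T)
      have hT : T ⊆ S \ S' := fun x hx => hsub' (mem_insert_of_mem hx)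
      have h1 : S' ∪ insert j T = insert j (S' ∪ T) := by
        ext x; simp [or_comm, or_assoc, or_left_comm]
      rw [h1, hpersist S' (S' ∪ T) (subset_union_left) j (hzero j hjmem), ih hT]
  have hfull : γ (S' ∪ (S \ S')) = γ S' := hkey (S \ S') (Subset.refl _)
  have hcover : S ⊆ S' ∪ (S \ S') := by
    intro x hx
    by_cases h : x ∈ S'
    · exact mem_union_left _ h
    · exact mem_union_right _ (mem_sdiff.mpr ⟨hx, h⟩)
  have hle : γ S ≤ γ S' := hfull ▸ hmono S (S' ∪ (S \ S')) hcover
  -- compute γ S and γ S'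
  have hSq : γ S = q * S.card := by
    rw [hS, Finset.sum_congr rfl (fun i hi => hq i (mem_union_left _ hi)),
      Finset.sum_const, smul_eq_mul, mul_comm]
  have hS'q : γ S' = q * S'.card := by
    rw [hS', Finset.sum_congr rfl (fun i hi => hq i (mem_union_right _ hi)),
      Finset.sum_const, smul_eq_mul, mul_comm]
  have hSne : S.Nonempty := Finset.card_pos.mp (Nat.lt_of_le_of_lt (Nat.zero_le _) hcard)
  obtain ⟨i, hi⟩ := hSne
  have hq1 : 1 ≤ q := (hq i (mem_union_left _ hi)) ▸ hp i
  rw [hSq, hS'q] at hle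
  have : S.card ≤ S'.card := Nat.le_of_mul_le_mul_left hle hq1
  omega
end

section
/- (Matroidal structure of independent sets in a profit class) Fix a profit value q and let P = {i ∈ [n] : p_i = q}. Then the family M = {S ⊆ P : S is independent} is the family of independent sets of a matroid on P; that is, ∅ ∈ M, M is closed under taking subsets, and for every A ⊆ P, any two subsets of A that are inclusionwise maximal among members of M contained in A have the same cardinality. -/
open Finset

section Aux

variable {n : ℕ} {γ : Finset (Fin n) → ℕ} {p : Fin n → ℕ}

lemma aon_le (hγ0 : γ ∅ = 0)
    (haon : ∀ (i : Fin n) (S : Finset (Fin n)),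
      γ (insert i S) = γ S ∨ γ (insert i S) = γ S + p i) :
    ∀ S : Finset (Fin n), γ S ≤ ∑ i ∈ S, p i := by
  intro S
  induction S using Finset.induction_on with
  | empty => simp [hγ0]
  | insert _ _ h ih =>
    rename_i a s
    rcases haon a s with h1 | h1 <;> rw [Finset.sum_insert h, h1] <;> omega

lemma aon_union_le (haon : ∀ (i : Fin n) (S : Finset (Fin n)),
      γ (insert i S) = γ S ∨ γ (insert i S) = γ S + p i) :
    ∀ S T : Finset (Fin n), γ (S ∪ T) ≤ γ S + ∑ i ∈ T, p i := by
  intro S T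
  induction T using Finset.induction_on with
  | empty => simp
  | insert _ _ h ih =>
    rename_i a s
    rw [Finset.union_insert, Finset.sum_insert h]
    rcases haon a (S ∪ s) with h1 | h1 <;> rw [h1] <;> omega

lemma aon_subset (hγ0 : γ ∅ = 0)
    (haon : ∀ (i : Fin n) (S : Finset (Fin n)),
      γ (insert i S) = γ S ∨ γ (insert i S) = γ S + p i)
    {S S' : Finset (Fin n)} (hss : S' ⊆ S) (hind : AoNIndep γ p S) :
    AoNIndep γ p S' := by
  have h1 : γ S' ≤ ∑ i ∈ S', p i := aon_le hγ0 haon S'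
  have h2 : γ (S' ∪ (S \ S')) ≤ γ S' + ∑ i ∈ S \ S', p i := aon_union_le haon _ _
  rw [Finset.union_sdiff_of_subset hss] at h2
  have h3 : ∑ i ∈ S \ S', p i + ∑ i ∈ S', p i = ∑ i ∈ S, p i := Finset.sum_sdiff hss
  unfold AoNIndep at hind ⊢
  omega

lemma aon_flat (hmono : ∀ S T : Finset (Fin n), S ⊆ T → γ S ≤ γ T)
    (hsub : ∀ S T : Finset (Fin n), S ⊆ T → ∀ i : Fin n,
      γ (insert i S) + γ T ≥ γ (insert i T) + γ S)
    (B : Finset (Fin n)) :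
    ∀ D : Finset (Fin n), (∀ i ∈ D, γ (insert i B) = γ B) → γ (B ∪ D) = γ B := by
  intro D
  induction D using Finset.induction_on with
  | empty => simp
  | insert _ _ h ih =>
    rename_i a s
    intro hD
    have hBD : γ (B ∪ s) = γ B := ih fun i hi => hD i (Finset.mem_insert_of_mem hi)
    have hsub' := hsub B (B ∪ s) Finset.subset_union_left a
    have ha : γ (insert a B) = γ B := hD a (Finset.mem_insert_self a s)
    have hge : γ (B ∪ s) ≤ γ (insert a (B ∪ s)) :=
      hmono _ _ (Finset.subset_insert _ _)
    rw [Finset.union_insert]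
    omega

end Aux

theorem profit_class_matroid {n : ℕ} (γ : Finset (Fin n) → ℕ) (p : Fin n → ℕ)
    (hp : ∀ i, 1 ≤ p i)
    (hγ0 : γ ∅ = 0)
    (hmono : ∀ S T : Finset (Fin n), S ⊆ T → γ S ≤ γ T)
    (hsub : ∀ S T : Finset (Fin n), S ⊆ T → ∀ i : Fin n,
      γ (insert i S) + γ T ≥ γ (insert i T) + γ S)
    (haon : ∀ (i : Fin n) (S : Finset (Fin n)),
      γ (insert i S) = γ S ∨ γ (insert i S) = γ S + p i)
    (q : ℕ) (P : Finset (Fin n)) (hP : P = Finset.univ.filter (fun i => p i = q)) :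
    -- the empty set is independent
    AoNIndep γ p ∅ ∧
    -- independence (within P) is closed under taking subsets
    (∀ S S' : Finset (Fin n), S ⊆ P → S' ⊆ S → AoNIndep γ p S → AoNIndep γ p S') ∧
    -- all inclusionwise maximal independent subsets of any A ⊆ P have equal cardinality
    (∀ A : Finset (Fin n), A ⊆ P →
      ∀ B B' : Finset (Fin n),
        B ⊆ A → AoNIndep γ p B →
        (∀ C : Finset (Fin n), C ⊆ A → AoNIndep γ p C → B ⊆ C → B = C) →
        B' ⊆ A → AoNIndep γ p B' →
        (∀ C : Finset (Fin n), C ⊆ A → AoNIndep γ p C → B' ⊆ C → B' = C) →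
        B.card = B'.card) := by
  have hPq : ∀ i ∈ P, p i = q := by
    intro i hi; rw [hP] at hi; simpa using hi
  -- augmentation property
  have haug : ∀ B B' : Finset (Fin n), B ⊆ P → B' ⊆ P →
      AoNIndep γ p B → AoNIndep γ p B' → B.card < B'.card →
      ∃ i ∈ B', i ∉ B ∧ AoNIndep γ p (insert i B) := by
    intro B B' hB hB' hiB hiB' hcard
    by_contra hcon
    push_neg at hcon
    have hflat : ∀ i ∈ B' \ B, γ (insert i B) = γ B := by
      intro i hi
      rw [Finset.mem_sdiff] at hi
      rcases haon i B with h1 | h1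
      · exact h1
      · exfalso
        apply hcon i hi.1 hi.2
        unfold AoNIndep at hiB ⊢
        rw [Finset.sum_insert hi.2, h1, hiB]; omega
    have h1 : γ (B ∪ (B' \ B)) = γ B := aon_flat hmono hsub B _ hflat
    rw [Finset.union_sdiff_self_eq_union] at h1
    have h2 : γ B' ≤ γ (B ∪ B') := hmono _ _ Finset.subset_union_right
    have hq : 1 ≤ q := by
      obtain ⟨i, hi⟩ := Finset.card_pos.mp (show 0 < B'.card by omega)
      have := hp i; rw [hPq i (hB' hi)] at this; exact this
    have hsB : ∑ i ∈ B, p i = q * B.card := by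
      rw [Finset.sum_congr rfl fun i hi => hPq i (hB hi)]
      simp [mul_comm]
    have hsB' : ∑ i ∈ B', p i = q * B'.card := by
      rw [Finset.sum_congr rfl fun i hi => hPq i (hB' hi)]
      simp [mul_comm]
    unfold AoNIndep at hiB hiB'
    have : q * B'.card ≤ q * B.card := by omega
    have := Nat.le_of_mul_le_mul_left this hq
    omega
  refine ⟨by simp [AoNIndep, hγ0], fun S S' _ hss hind => aon_subset hγ0 haon hss hind, ?_⟩
  intro A hA B B' hBA hBind hBmax hB'A hB'ind hB'max
  by_contra hne
  -- wlog: handle both orders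
  have key : ∀ C C' : Finset (Fin n), C ⊆ A → AoNIndep γ p C →
      (∀ D : Finset (Fin n), D ⊆ A → AoNIndep γ p D → C ⊆ D → C = D) →
      C' ⊆ A → AoNIndep γ p C' → ¬ C.card < C'.card := by
    intro C C' hCA hCind hCmax hC'A hC'ind hlt
    obtain ⟨i, hiC', hiC, hind⟩ := haug C C' (hCA.trans hA) (hC'A.trans hA) hCind hC'ind hlt
    have hins : insert i C ⊆ A := Finset.insert_subset (hC'A hiC') hCA
    have := hCmax (insert i C) hins hind (Finset.subset_insert _ _)
    exact hiC (this ▸ Finset.mem_insert_self i C)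
  rcases Nat.lt_or_ge B.card B'.card with h | h
  · exact key B B' hBA hBind hBmax hB'A hB'ind h
  · exact key B' B hB'A hB'ind hB'max hBA hBind (by omega)
end

section
/- (Optimality of independence) For every feasible chain 𝒮 = (S_1, …, S_T) there exists a feasible independent chain 𝒮' = (S'_1, …, S'_T) with S'_t ⊆ S_t for every t ∈ [T] and Φ(𝒮') ≥ Φ(𝒮). In particular, there is an optimal feasible chain that is independent. -/
open Finset

lemma flat_aux {n : ℕ} (γ : Finset (Fin n) → ℕ)
    (hmono : ∀ S T : Finset (Fin n), S ⊆ T → γ S ≤ γ T)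
    (hsub : ∀ S T : Finset (Fin n), S ⊆ T → ∀ i : Fin n,
      γ (insert i S) + γ T ≥ γ (insert i T) + γ S) :
    ∀ (k : ℕ) (B C : Finset (Fin n)), (C \ B).card = k → B ⊆ C →
      (∀ i ∈ C, γ (insert i B) = γ B) → γ C = γ B := by
  intro k
  induction k with
  | zero =>
    intro B C hcard hBC _
    have h0 : C \ B = ∅ := card_eq_zero.mp hcard
    have hCB : C ⊆ B := fun x hx => by
      by_contra hxB
      exact absurd (mem_sdiff.mpr ⟨hx, hxB⟩) (by simp [h0])
    exact le_antisymm (hmono _ _ hCB) (hmono _ _ hBC)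
  | succ k ih =>
    intro B C hcard hBC hflat
    have hne : (C \ B).Nonempty := card_pos.mp (by omega)
    obtain ⟨i, hi⟩ := hne
    have hiC : i ∈ C := (mem_sdiff.mp hi).1
    have hiB : i ∉ B := (mem_sdiff.mp hi).2
    set C' := C.erase i with hC'
    have hBC' : B ⊆ C' := fun x hx => mem_erase.mpr ⟨fun h => hiB (h ▸ hx), hBC hx⟩
    have hins : insert i C' = C := insert_erase hiC
    have hsubm := hsub B C' hBC' i
    rw [hins, hflat i hiC] at hsubm
    have h1 : γ C ≤ γ C' := by omega
    have h2 : γ C' ≤ γ C := hmono _ _ (erase_subset _ _)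
    have hcard' : (C' \ B).card = k := by
      have : C' \ B = (C \ B).erase i := by
        ext x; simp [hC', mem_erase, mem_sdiff]; tauto
      rw [this, card_erase_of_mem hi, hcard]; omega
    have := ih B C' hcard' hBC' (fun j hj => hflat j (erase_subset _ _ hj))
    omega

lemma extend_aux {n : ℕ} (γ : Finset (Fin n) → ℕ) (p : Fin n → ℕ)
    (hp : ∀ i, 1 ≤ p i)
    (hmono : ∀ S T : Finset (Fin n), S ⊆ T → γ S ≤ γ T)
    (hsub : ∀ S T : Finset (Fin n), S ⊆ T → ∀ i : Fin n,
      γ (insert i S) + γ T ≥ γ (insert i T) + γ S)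
    (haon : ∀ (i : Fin n) (S : Finset (Fin n)),
      γ (insert i S) = γ S ∨ γ (insert i S) = γ S + p i) :
    ∀ (k : ℕ) (A B : Finset (Fin n)), γ A - γ B = k → B ⊆ A → AoNIndep γ p B →
      ∃ B', B ⊆ B' ∧ B' ⊆ A ∧ AoNIndep γ p B' ∧ γ B' = γ A := by
  intro k
  induction k using Nat.strong_induction_on with
  | _ k ih =>
    intro A B hk hBA hB
    rcases eq_or_lt_of_le (hmono _ _ hBA) with heq | hlt
    · exact ⟨B, Subset.rfl, hBA, hB, heq⟩
    · -- find an augmenting element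
      have hex : ∃ i ∈ A, i ∉ B ∧ γ (insert i B) = γ B + p i := by
        by_contra hcon
        push_neg at hcon
        have hflat : ∀ i ∈ A, γ (insert i B) = γ B := by
          intro i hiA
          by_cases hiB : i ∈ B
          · rw [insert_eq_self.mpr hiB]
          · rcases haon i B with h | h
            · exact h
            · exact absurd h (hcon i hiA hiB)
        have := flat_aux γ hmono hsub ((A \ B).card) B A rfl hBA hflat
        omega
      obtain ⟨i, hiA, hiB, hmarg⟩ := hex
      have hindep : AoNIndep γ p (insert i B) := by
        unfold AoNIndep at hB ⊢
        rw [sum_insert hiB, hmarg, hB]; ring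
      have hsubA : insert i B ⊆ A := insert_subset hiA hBA
      have hdec : γ A - γ (insert i B) < k := by
        have := hp i
        have := hmono _ _ hsubA
        omega
      exact (ih _ hdec A (insert i B) rfl hsubA hindep).imp
        fun B' ⟨h1, h2, h3, h4⟩ => ⟨(subset_insert i B).trans h1, h2, h3, h4⟩

noncomputable def chainBuild {n : ℕ} (γ : Finset (Fin n) → ℕ) (p : Fin n → ℕ)
    (hext : ∀ (A B : Finset (Fin n)), B ⊆ A → AoNIndep γ p B →
      ∃ B', B ⊆ B' ∧ B' ⊆ A ∧ AoNIndep γ p B' ∧ γ B' = γ A)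
    (hempty : AoNIndep γ p (∅ : Finset (Fin n)))
    (A : ℕ → Finset (Fin n)) (hA : ∀ t, A t ⊆ A (t + 1)) :
    ∀ t : ℕ, {B : Finset (Fin n) // B ⊆ A t ∧ AoNIndep γ p B ∧ γ B = γ (A t)}
  | 0 =>
    let h := hext (A 0) ∅ (empty_subset _) hempty
    ⟨h.choose, h.choose_spec.2.1, h.choose_spec.2.2.1, h.choose_spec.2.2.2⟩
  | t + 1 =>
    let prev := chainBuild γ p hext hempty A hA t
    let h := hext (A (t + 1)) prev.val (prev.2.1.trans (hA t)) prev.2.2.1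
    ⟨h.choose, h.choose_spec.2.1, h.choose_spec.2.2.1, h.choose_spec.2.2.2⟩

lemma chainBuild_mono {n : ℕ} (γ : Finset (Fin n) → ℕ) (p : Fin n → ℕ)
    (hext : ∀ (A B : Finset (Fin n)), B ⊆ A → AoNIndep γ p B →
      ∃ B', B ⊆ B' ∧ B' ⊆ A ∧ AoNIndep γ p B' ∧ γ B' = γ A)
    (hempty : AoNIndep γ p (∅ : Finset (Fin n)))
    (A : ℕ → Finset (Fin n)) (hA : ∀ t, A t ⊆ A (t + 1)) (t : ℕ) :
    (chainBuild γ p hext hempty A hA t).val ⊆ (chainBuild γ p hext hempty A hA (t + 1)).val := by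
  have h := hext (A (t + 1)) (chainBuild γ p hext hempty A hA t).val
    ((chainBuild γ p hext hempty A hA t).2.1.trans (hA t))
    (chainBuild γ p hext hempty A hA t).2.2.1
  exact h.choose_spec.1

theorem optimality_of_independence {n T : ℕ} (γ : Finset (Fin n) → ℕ)
    (p w : Fin n → ℕ) (W Δ : Fin T → ℕ)
    (hW : Monotone W)
    (hp : ∀ i, 1 ≤ p i)
    (hγ0 : γ ∅ = 0)
    (hmono : ∀ S T : Finset (Fin n), S ⊆ T → γ S ≤ γ T)
    (hsub : ∀ S T : Finset (Fin n), S ⊆ T → ∀ i : Fin n,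
      γ (insert i S) + γ T ≥ γ (insert i T) + γ S)
    (haon : ∀ (i : Fin n) (S : Finset (Fin n)),
      γ (insert i S) = γ S ∨ γ (insert i S) = γ S + p i)
    (S : Fin T → Finset (Fin n))
    (hchain : Monotone S)
    (hfeas : ∀ t, ∑ i ∈ S t, w i ≤ W t) :
    ∃ S' : Fin T → Finset (Fin n),
      Monotone S' ∧
      (∀ t, S' t ⊆ S t) ∧
      (∀ t, ∑ i ∈ S' t, w i ≤ W t) ∧
      (∀ t, AoNIndep γ p (S' t)) ∧
      ∑ t, Δ t * γ (S t) ≤ ∑ t, Δ t * γ (S' t) := by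
  classical
  have hext : ∀ (A B : Finset (Fin n)), B ⊆ A → AoNIndep γ p B →
      ∃ B', B ⊆ B' ∧ B' ⊆ A ∧ AoNIndep γ p B' ∧ γ B' = γ A :=
    fun A B hBA hB => extend_aux γ p hp hmono hsub haon (γ A - γ B) A B rfl hBA hB
  have hempty : AoNIndep γ p (∅ : Finset (Fin n)) := by simp [AoNIndep, hγ0]
  set A : ℕ → Finset (Fin n) :=
    fun t => if h : t < T then S ⟨t, h⟩ else Finset.univ with hAdef
  have hA : ∀ t, A t ⊆ A (t + 1) := by
    intro t
    by_cases h : t + 1 < T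
    · have h' : t < T := by omega
      simp only [hAdef, dif_pos h, dif_pos h']
      exact hchain (by simp [Fin.le_def])
    · simp only [hAdef, dif_neg h]
      exact subset_univ _
  set F := chainBuild γ p hext hempty A hA with hF
  have hFmono : Monotone fun t => (F t).val :=
    monotone_nat_of_le_succ fun t => chainBuild_mono γ p hext hempty A hA t
  have hAS : ∀ t : Fin T, A t.val = S t := by
    intro t
    simp only [hAdef, dif_pos t.isLt]
  refine ⟨fun t => (F t.val).val, ?_, ?_, ?_, ?_, ?_⟩
  · intro t t' htt'
    exact hFmono (show (t : ℕ) ≤ t' from htt')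
  · intro t
    exact (F t.val).2.1.trans (le_of_eq (hAS t))
  · intro t
    have hsubS : (F t.val).val ⊆ S t := (F t.val).2.1.trans (le_of_eq (hAS t))
    exact le_trans (sum_le_sum_of_subset hsubS) (hfeas t)
  · intro t
    exact (F t.val).2.2.1
  · apply le_of_eq
    refine Finset.sum_congr rfl fun t _ => ?_
    exact (((F t.val).2.2.2).trans (congrArg γ (hAS t))).symm ▸ rfl
end

section
/- (Local optimality of chains contained in a minimum-weight basis of a profit class) Fix a profit value q and let P = {i ∈ [n] : p_i = q}. Let P_I ⊆ P be an inclusionwise maximal independent subset of P of minimum total weight, i.e., P_I is independent, there is no independent S with P_I ⊊ S ⊆ P, and ∑_{i ∈ P_I} w_i ≤ ∑_{i ∈ B} w_i for every inclusionwise maximal independent B ⊆ P. Then for every independent chain 𝒮 = (S_1, …, S_T) with S_T ⊆ P, there exists an independent chain 𝒮' = (S'_1, …, S'_T) with S'_T ⊆ P_I such that γ(S'_t) = γ(S_t) and ∑_{i ∈ S'_t} w_i ≤ ∑_{i ∈ S_t} w_i for every t ∈ [T]. -/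
open Finset

namespace LocalOptAux

variable {n : ℕ} {γ : Finset (Fin n) → ℕ} {p : Fin n → ℕ}


/-- Sort key: lexicographic by (weight, index). -/
def key (w : Fin n → ℕ) (i : Fin n) : ℕ := w i * n + i.1

/-- The sorting relation. -/
def kle (w : Fin n → ℕ) (a b : Fin n) : Prop := key w a ≤ key w b

lemma key_lt {w : Fin n → ℕ} {a b : Fin n} (h : w a < w b) : key w a < key w b := by
  have ha : a.1 < n := a.2
  calc key w a = w a * n + a.1 := rfl
    _ < (w a + 1) * n := by nlinarith
    _ ≤ w b * n := Nat.mul_le_mul_right n h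
    _ ≤ key w b := Nat.le_add_right _ _

lemma kle_w {w : Fin n → ℕ} {a b : Fin n} (h : kle w a b) : w a ≤ w b := by
  by_contra h'
  exact absurd h (not_le.mpr (key_lt (not_le.mp h')))

instance (w : Fin n → ℕ) : DecidableRel (kle w) :=
  fun a b => inferInstanceAs (Decidable (key w a ≤ key w b))

instance (w : Fin n → ℕ) : IsTrans (Fin n) (kle w) := ⟨fun _ _ _ => Nat.le_trans⟩
instance (w : Fin n → ℕ) : IsTotal (Fin n) (kle w) := ⟨fun _ _ => Nat.le_total _ _⟩
instance (w : Fin n → ℕ) : IsAntisymm (Fin n) (kle w) := by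
  constructor
  intro a b hab hba
  have hk : key w a = key w b := le_antisymm hab hba
  have hw : w a = w b := le_antisymm (kle_w hab) (kle_w hba)
  have : a.1 = b.1 := by
    unfold key at hk
    rw [hw] at hk
    omega
  exact Fin.ext this



lemma insert_le (haon : ∀ (i : Fin n) (S : Finset (Fin n)),
      γ (insert i S) = γ S ∨ γ (insert i S) = γ S + p i)
    (i : Fin n) (A : Finset (Fin n)) : γ (insert i A) ≤ γ A + p i := by
  rcases haon i A with h | h <;> omega

lemma union_le (haon : ∀ (i : Fin n) (S : Finset (Fin n)),
      γ (insert i S) = γ S ∨ γ (insert i S) = γ S + p i)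
    (A B : Finset (Fin n)) : γ (A ∪ B) ≤ γ A + ∑ i ∈ B, p i := by
  induction B using Finset.induction_on with
  | empty => simp
  | @insert a B ha ih =>
    have h1 : A ∪ insert a B = insert a (A ∪ B) := by
      ext x; simp [or_comm, or_left_comm]
    rw [h1, Finset.sum_insert ha]
    have := insert_le (γ := γ) (p := p) haon a (A ∪ B)
    omega

lemma gamma_le_sum (hγ0 : γ ∅ = 0)
    (haon : ∀ (i : Fin n) (S : Finset (Fin n)),
      γ (insert i S) = γ S ∨ γ (insert i S) = γ S + p i)
    (A : Finset (Fin n)) : γ A ≤ ∑ i ∈ A, p i := by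
  have := union_le (γ := γ) (p := p) haon ∅ A
  simpa [hγ0] using this

/-- Downward closure of independence. -/
lemma indep_subset (hγ0 : γ ∅ = 0)
    (haon : ∀ (i : Fin n) (S : Finset (Fin n)),
      γ (insert i S) = γ S ∨ γ (insert i S) = γ S + p i)
    {S' S : Finset (Fin n)} (hsub : S' ⊆ S) (hS : AoNIndep γ p S) :
    AoNIndep γ p S' := by
  unfold AoNIndep at *
  have h1 : γ S ≤ γ S' + ∑ i ∈ S \ S', p i := by
    have := union_le (γ := γ) (p := p) haon S' (S \ S')
    rwa [Finset.union_sdiff_of_subset hsub] at this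
  have h2 : ∑ i ∈ S \ S', p i + ∑ i ∈ S', p i = ∑ i ∈ S, p i :=
    Finset.sum_sdiff (f := p) hsub
  have h3 : γ S' ≤ ∑ i ∈ S', p i := gamma_le_sum hγ0 haon S'
  omega

/-- If no single element of `D` increases `γ` over `A`, then the union doesn't either. -/
lemma stay (hmono : ∀ S T : Finset (Fin n), S ⊆ T → γ S ≤ γ T)
    (hsub : ∀ S T : Finset (Fin n), S ⊆ T → ∀ i : Fin n,
      γ (insert i S) + γ T ≥ γ (insert i T) + γ S)
    (A D : Finset (Fin n)) (h : ∀ i ∈ D, γ (insert i A) = γ A) :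
    γ (A ∪ D) = γ A := by
  induction D using Finset.induction_on with
  | empty => simp
  | @insert a D ha ih =>
    have hD : ∀ i ∈ D, γ (insert i A) = γ A := fun i hi => h i (Finset.mem_insert_of_mem hi)
    have hAD : γ (A ∪ D) = γ A := ih hD
    have h1 : A ∪ insert a D = insert a (A ∪ D) := by
      ext x; simp [or_comm, or_left_comm]
    have h2 := hsub A (A ∪ D) Finset.subset_union_left a
    have h3 := h a (Finset.mem_insert_self a D)
    have h4 := hmono A (A ∪ insert a D) Finset.subset_union_left
    rw [h1]
    rw [h1] at h4
    omega

/-- Exchange property within a constant-profit class. -/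
lemma exchange (hp : ∀ i, 1 ≤ p i)
    (hmono : ∀ S T : Finset (Fin n), S ⊆ T → γ S ≤ γ T)
    (hsubm : ∀ S T : Finset (Fin n), S ⊆ T → ∀ i : Fin n,
      γ (insert i S) + γ T ≥ γ (insert i T) + γ S)
    (haon : ∀ (i : Fin n) (S : Finset (Fin n)),
      γ (insert i S) = γ S ∨ γ (insert i S) = γ S + p i)
    {q : ℕ} {A B : Finset (Fin n)}
    (hA : ∀ i ∈ A, p i = q) (hB : ∀ i ∈ B, p i = q)
    (hAi : AoNIndep γ p A) (hBi : AoNIndep γ p B)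
    (hcard : A.card < B.card) :
    ∃ x ∈ B, x ∉ A ∧ AoNIndep γ p (insert x A) := by
  by_contra hcon
  push_neg at hcon
  have hno : ∀ i ∈ B \ A, γ (insert i A) = γ A := by
    intro i hi
    rw [Finset.mem_sdiff] at hi
    rcases haon i A with h | h
    · exact h
    · exfalso
      apply hcon i hi.1 hi.2
      unfold AoNIndep at *
      rw [Finset.sum_insert hi.2]
      omega
  have hstay := stay hmono hsubm A (B \ A) hno
  rw [Finset.union_sdiff_self_eq_union] at hstay
  have hge : γ B ≤ γ (A ∪ B) := hmono B (A ∪ B) Finset.subset_union_right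
  have hAq : γ A = q * A.card := by
    rw [hAi, Finset.sum_congr rfl hA, Finset.sum_const, smul_eq_mul, mul_comm]
  have hBq : γ B = q * B.card := by
    rw [hBi, Finset.sum_congr rfl hB, Finset.sum_const, smul_eq_mul, mul_comm]
  have hq1 : 1 ≤ q := by
    have hBne : B.Nonempty := Finset.card_pos.mp (by omega)
    obtain ⟨b, hb⟩ := hBne
    have := hp b
    rw [hB b hb] at this
    exact this
  nlinarith

section Matroid

variable (hp : ∀ i, 1 ≤ p i)
  (hγ0 : γ ∅ = 0)
  (hmono : ∀ S T : Finset (Fin n), S ⊆ T → γ S ≤ γ T)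
  (hsubm : ∀ S T : Finset (Fin n), S ⊆ T → ∀ i : Fin n,
      γ (insert i S) + γ T ≥ γ (insert i T) + γ S)
  (haon : ∀ (i : Fin n) (S : Finset (Fin n)),
      γ (insert i S) = γ S ∨ γ (insert i S) = γ S + p i)
  {q : ℕ} {P : Finset (Fin n)} (hPq : ∀ i ∈ P, p i = q)
  {PI : Finset (Fin n)} (hPIsub : PI ⊆ P) (hPIindep : AoNIndep γ p PI)
  (hPImax : ∀ B : Finset (Fin n), B ⊆ P → AoNIndep γ p B → PI ⊆ B → PI = B)

include hp hγ0 hmono hsubm haon hPq hPIsub hPIindep hPImax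

lemma card_le_PI {A : Finset (Fin n)} (hA : A ⊆ P) (hAi : AoNIndep γ p A) :
    A.card ≤ PI.card := by
  by_contra hcon
  obtain ⟨x, hxA, hxPI, hxi⟩ := exchange hp hmono hsubm haon
    (fun i hi => hPq i (hPIsub hi)) (fun i hi => hPq i (hA hi)) hPIindep hAi (by omega)
  have := hPImax (insert x PI) (Finset.insert_subset (hA hxA) hPIsub) hxi
    (Finset.subset_insert _ _)
  exact hxPI (this ▸ Finset.mem_insert_self x PI)

lemma augment : ∀ d (A : Finset (Fin n)), A ⊆ P → AoNIndep γ p A →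
    PI.card - A.card ≤ d →
    ∃ B : Finset (Fin n), A ⊆ B ∧ B ⊆ A ∪ PI ∧ B ⊆ P ∧ AoNIndep γ p B ∧
      B.card = PI.card := by
  intro d
  induction d with
  | zero =>
    intro A hAP hAi hd
    have h1 := card_le_PI hp hγ0 hmono hsubm haon hPq hPIsub hPIindep hPImax hAP hAi
    exact ⟨A, Finset.Subset.refl _, Finset.subset_union_left, hAP, hAi, by omega⟩
  | succ d ih =>
    intro A hAP hAi hd
    by_cases hc : PI.card ≤ A.card
    · have h1 := card_le_PI hp hγ0 hmono hsubm haon hPq hPIsub hPIindep hPImax hAP hAi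
      exact ⟨A, Finset.Subset.refl _, Finset.subset_union_left, hAP, hAi, by omega⟩
    · obtain ⟨x, hxPI, hxA, hxi⟩ := exchange hp hmono hsubm haon
        (fun i hi => hPq i (hAP hi)) (fun i hi => hPq i (hPIsub hi)) hAi hPIindep (by omega)
      have hcard : (insert x A).card = A.card + 1 := Finset.card_insert_of_notMem hxA
      obtain ⟨B, h1, h2, h3, h4, h5⟩ := ih (insert x A)
        (Finset.insert_subset (hPIsub hxPI) hAP) hxi (by omega)
      refine ⟨B, fun y hy => h1 (Finset.mem_insert_of_mem hy), ?_, h3, h4, h5⟩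
      intro y hy
      rcases Finset.mem_union.mp (h2 hy) with h | h
      · rcases Finset.mem_insert.mp h with h | h
        · exact Finset.mem_union_right _ (h ▸ hxPI)
        · exact Finset.mem_union_left _ h
      · exact Finset.mem_union_right _ h

end Matroid

section Sorting

variable (w : Fin n → ℕ) (PI : Finset (Fin n))

/-- first `k` elements of `PI` sorted by weight -/
def prefixF (k : ℕ) : Finset (Fin n) := ((PI.sort (kle w)).take k).toFinset

lemma prefix_subset (k : ℕ) : prefixF w PI k ⊆ PI := by
  intro x hx
  rw [prefixF, List.mem_toFinset] at hx
  have := List.take_subset k _ hx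
  rwa [← Finset.mem_sort (kle w)]

lemma prefix_card {k : ℕ} (hk : k ≤ PI.card) : (prefixF w PI k).card = k := by
  rw [prefixF, List.toFinset_card_of_nodup
    ((Finset.sort_nodup PI (kle w)).sublist (List.take_sublist k _))]
  rw [List.length_take, Finset.length_sort]
  omega

lemma prefix_mono {k k' : ℕ} (h : k ≤ k') : prefixF w PI k ⊆ prefixF w PI k' := by
  intro x hx
  rw [prefixF, List.mem_toFinset] at hx ⊢
  have heq : (PI.sort (kle w)).take k = ((PI.sort (kle w)).take k').take k := by
    rw [List.take_take, min_eq_left h]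
  rw [heq] at hx
  exact List.take_subset k _ hx

lemma prefix_min {k : ℕ} (hk : k < PI.card) {y : Fin n} (hy : y ∈ PI)
    (hy' : y ∉ prefixF w PI k) :
    w ((PI.sort (kle w)).get ⟨k, by rwa [Finset.length_sort]⟩) ≤ w y := by
  set l := PI.sort (kle w) with hl
  have hlen : l.length = PI.card := Finset.length_sort _
  have hklen : k < l.length := by omega
  have hydrop : y ∈ l.drop k := by
    have hyl : y ∈ l := by rw [hl, Finset.mem_sort]; exact hy
    rcases List.mem_append.mp ((List.take_append_drop k l) ▸ hyl) with h | h
    · exact absurd (List.mem_toFinset.mpr h) hy'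
    · exact h
  have hsorted : List.Pairwise (kle w) (l.drop k) :=
    (Finset.pairwise_sort PI (kle w)).sublist (List.drop_sublist k l)
  have hcons : l.drop k = l.get ⟨k, hklen⟩ :: l.drop (k + 1) := by
    rw [List.drop_eq_getElem_cons hklen]
    rfl
  rw [hcons] at hydrop hsorted
  rcases List.mem_cons.mp hydrop with h | h
  · rw [h]
  · exact kle_w (List.rel_of_pairwise_cons hsorted (a' := y) h)

lemma prefix_sum_succ {k : ℕ} (hk : k < PI.card) :
    ∑ i ∈ prefixF w PI (k + 1), w i =
      ∑ i ∈ prefixF w PI k, w i +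
        w ((PI.sort (kle w)).get ⟨k, by rwa [Finset.length_sort]⟩) := by
  set l := PI.sort (kle w) with hl
  have hklen : k < l.length := by rw [hl, Finset.length_sort]; omega
  have htake : l.take (k + 1) = l.take k ++ [l.get ⟨k, hklen⟩] := by
    rw [List.take_succ]
    congr 1
    rw [List.getElem?_eq_getElem hklen]
    rfl
  have hnotmem : l.get ⟨k, hklen⟩ ∉ (l.take k).toFinset := by
    rw [List.mem_toFinset]
    intro hmem
    have hnd : (l.take k ++ l.drop k).Nodup := by
      rw [List.take_append_drop]; exact Finset.sort_nodup _ _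
    have hdisj := (List.nodup_append'.mp hnd).2.2
    have hdrop : l.get ⟨k, hklen⟩ ∈ l.drop k := by
      rw [List.drop_eq_getElem_cons hklen]
      exact List.mem_cons_self
    exact hdisj hmem hdrop
  have hnotmem' : l.get ⟨k, hklen⟩ ∉ prefixF w PI k := by
    rw [prefixF, ← hl]; exact hnotmem
  have hins : prefixF w PI (k + 1) = insert (l.get ⟨k, hklen⟩) (prefixF w PI k) := by
    rw [prefixF, prefixF, ← hl, htake, List.toFinset_append]
    ext x; simp [or_comm]
  rw [hins, Finset.sum_insert hnotmem']
  exact Nat.add_comm _ _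

end Sorting

section Main

variable (hp : ∀ i, 1 ≤ p i)
  (hγ0 : γ ∅ = 0)
  (hmono : ∀ S T : Finset (Fin n), S ⊆ T → γ S ≤ γ T)
  (hsubm : ∀ S T : Finset (Fin n), S ⊆ T → ∀ i : Fin n,
      γ (insert i S) + γ T ≥ γ (insert i T) + γ S)
  (haon : ∀ (i : Fin n) (S : Finset (Fin n)),
      γ (insert i S) = γ S ∨ γ (insert i S) = γ S + p i)
  {q : ℕ} {P : Finset (Fin n)} (hPq : ∀ i ∈ P, p i = q)
  {PI : Finset (Fin n)} (hPIsub : PI ⊆ P) (hPIindep : AoNIndep γ p PI)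
  (hPImax : ∀ B : Finset (Fin n), B ⊆ P → AoNIndep γ p B → PI ⊆ B → PI = B)
  (w : Fin n → ℕ)
  (hPImin : ∀ B : Finset (Fin n), B ⊆ P → AoNIndep γ p B →
      (∀ C : Finset (Fin n), C ⊆ P → AoNIndep γ p C → B ⊆ C → B = C) →
      ∑ i ∈ PI, w i ≤ ∑ i ∈ B, w i)

include hp hγ0 hmono hsubm haon hPq hPIsub hPIindep hPImax hPImin

lemma swap {A : Finset (Fin n)} (hAP : A ⊆ P) (hAi : AoNIndep γ p A)
    {k : ℕ} (hkcard : A.card = k + 1) (hkPI : k < PI.card) :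
    ∃ x ∈ A, w ((PI.sort (kle w)).get ⟨k, by rwa [Finset.length_sort]⟩) ≤ w x := by
  by_contra hcon
  push_neg at hcon
  set l := PI.sort (kle w) with hl
  set b := l.get ⟨k, by rw [hl, Finset.length_sort]; exact hkPI⟩ with hb
  set B' := prefixF w PI k with hB'
  have hB'sub : B' ⊆ PI := prefix_subset w PI k
  have hB'P : B' ⊆ P := hB'sub.trans hPIsub
  have hB'card : B'.card = k := prefix_card w PI (le_of_lt hkPI)
  have hB'i : AoNIndep γ p B' := indep_subset hγ0 haon hB'sub hPIindep
  obtain ⟨x, hxA, hxB', hxi⟩ := exchange hp hmono hsubm haon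
    (fun i hi => hPq i (hB'P hi)) (fun i hi => hPq i (hAP hi)) hB'i hAi (by omega)
  have hwx : w x < w b := hcon x hxA
  have hxPI : x ∉ PI := by
    intro hmem
    exact absurd (prefix_min w PI hkPI hmem hxB') (not_le.mpr hwx)
  have hB0P : insert x B' ⊆ P := Finset.insert_subset (hAP hxA) hB'P
  obtain ⟨B'', hB1, hB2, hB''P, hB''i, hB''card⟩ :=
    augment hp hγ0 hmono hsubm haon hPq hPIsub hPIindep hPImax PI.card
      (insert x B') hB0P hxi (Nat.sub_le _ _)
  have hxB'' : x ∈ B'' := hB1 (Finset.mem_insert_self _ _)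
  set E := B''.erase x with hE
  have hEsub : E ⊆ PI := by
    intro y hy
    have hyB'' := Finset.mem_of_mem_erase hy
    have hyx := Finset.ne_of_mem_erase hy
    rcases Finset.mem_union.mp (hB2 hyB'') with h | h
    · rcases Finset.mem_insert.mp h with h | h
      · exact absurd h hyx
      · exact hB'sub h
    · exact h
  have hEcard : E.card = PI.card - 1 := by
    rw [hE, Finset.card_erase_of_mem hxB'', hB''card]
  have hsd : (PI \ E).card = 1 := by
    rw [Finset.card_sdiff_of_subset hEsub]
    omega
  obtain ⟨y, hy⟩ := Finset.card_eq_one.mp hsd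
  have hyPI : y ∈ PI := (Finset.mem_sdiff.mp (hy ▸ Finset.mem_singleton_self y)).1
  have hyE : y ∉ E := (Finset.mem_sdiff.mp (hy ▸ Finset.mem_singleton_self y)).2
  have hyx : y ≠ x := fun h => hxPI (h ▸ hyPI)
  have hyB'' : y ∉ B'' := fun h => hyE (Finset.mem_erase.mpr ⟨hyx, h⟩)
  have hyB' : y ∉ B' := fun h =>
    hyB'' (hB1 (Finset.mem_insert_of_mem h))
  have hwy : w b ≤ w y := prefix_min w PI hkPI hyPI hyB'
  have hEeq : E = PI.erase y := by
    apply Finset.eq_of_subset_of_card_le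
    · intro z hz
      exact Finset.mem_erase.mpr ⟨fun h => hyE (h ▸ hz), hEsub hz⟩
    · rw [Finset.card_erase_of_mem hyPI]
      omega
  have hxE : x ∉ E := fun h => (Finset.mem_erase.mp h).1 rfl
  have hB''eq : B'' = insert x E := (Finset.insert_erase hxB'').symm
  have hsum1 : ∑ i ∈ B'', w i = w x + ∑ i ∈ E, w i := by
    rw [hB''eq, Finset.sum_insert hxE]
  have hsum2 : ∑ i ∈ PI, w i = w y + ∑ i ∈ E, w i := by
    rw [hEeq, Finset.add_sum_erase PI w hyPI]
  have hmaximal : ∀ C : Finset (Fin n), C ⊆ P → AoNIndep γ p C → B'' ⊆ C → B'' = C := by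
    intro C hCP hCi hBC
    apply Finset.eq_of_subset_of_card_le hBC
    have := card_le_PI hp hγ0 hmono hsubm haon hPq hPIsub hPIindep hPImax hCP hCi
    omega
  have hmin := hPImin B'' hB''P hB''i hmaximal
  omega

lemma prefix_le : ∀ (k : ℕ) (A : Finset (Fin n)), A ⊆ P → AoNIndep γ p A → A.card = k →
    ∑ i ∈ prefixF w PI k, w i ≤ ∑ i ∈ A, w i := by
  intro k
  induction k with
  | zero =>
    intro A _ _ _
    simp [prefixF]
  | succ k ih =>
    intro A hAP hAi hcard
    have hkPI : k < PI.card := by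
      have := card_le_PI hp hγ0 hmono hsubm haon hPq hPIsub hPIindep hPImax hAP hAi
      omega
    obtain ⟨x, hxA, hwx⟩ := swap hp hγ0 hmono hsubm haon hPq hPIsub hPIindep hPImax w
      hPImin hAP hAi hcard hkPI
    have hAe : (A.erase x) ⊆ P := (Finset.erase_subset _ _).trans hAP
    have hAei : AoNIndep γ p (A.erase x) :=
      indep_subset hγ0 haon (Finset.erase_subset _ _) hAi
    have hAecard : (A.erase x).card = k := by
      rw [Finset.card_erase_of_mem hxA]; omega
    have hih := ih (A.erase x) hAe hAei hAecard
    have hrec := prefix_sum_succ w PI hkPI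
    have hsum : ∑ i ∈ A.erase x, w i + w x = ∑ i ∈ A, w i :=
      Finset.sum_erase_add A w hxA
    omega

end Main

end LocalOptAux

theorem local_optimality_in_profit_class {n T : ℕ} (γ : Finset (Fin n) → ℕ)
    (p w : Fin n → ℕ)
    (hp : ∀ i, 1 ≤ p i)
    (hγ0 : γ ∅ = 0)
    (hmono : ∀ S T : Finset (Fin n), S ⊆ T → γ S ≤ γ T)
    (hsub : ∀ S T : Finset (Fin n), S ⊆ T → ∀ i : Fin n,
      γ (insert i S) + γ T ≥ γ (insert i T) + γ S)
    (haon : ∀ (i : Fin n) (S : Finset (Fin n)),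
      γ (insert i S) = γ S ∨ γ (insert i S) = γ S + p i)
    (q : ℕ) (P : Finset (Fin n)) (hP : P = Finset.univ.filter (fun i => p i = q))
    (PI : Finset (Fin n))
    (hPIsub : PI ⊆ P)
    (hPIindep : AoNIndep γ p PI)
    (hPImax : ∀ B : Finset (Fin n), B ⊆ P → AoNIndep γ p B → PI ⊆ B → PI = B)
    (hPImin : ∀ B : Finset (Fin n), B ⊆ P → AoNIndep γ p B →
      (∀ C : Finset (Fin n), C ⊆ P → AoNIndep γ p C → B ⊆ C → B = C) →
      ∑ i ∈ PI, w i ≤ ∑ i ∈ B, w i)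
    (S : Fin T → Finset (Fin n))
    (hchain : Monotone S)
    (hindep : ∀ t, AoNIndep γ p (S t))
    (hsubP : ∀ t, S t ⊆ P) :
    ∃ S' : Fin T → Finset (Fin n),
      Monotone S' ∧
      (∀ t, S' t ⊆ PI) ∧
      (∀ t, AoNIndep γ p (S' t)) ∧
      (∀ t, γ (S' t) = γ (S t)) ∧
      (∀ t, ∑ i ∈ S' t, w i ≤ ∑ i ∈ S t, w i) := by
  classical
  have hPq : ∀ i ∈ P, p i = q := by
    intro i hi
    rw [hP, Finset.mem_filter] at hi
    exact hi.2
  refine ⟨fun t => LocalOptAux.prefixF w PI (S t).card, ?_, ?_, ?_, ?_, ?_⟩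
  · intro t t' htt
    exact LocalOptAux.prefix_mono w PI (Finset.card_le_card (hchain htt))
  · intro t
    exact LocalOptAux.prefix_subset w PI _
  · intro t
    exact LocalOptAux.indep_subset hγ0 haon (LocalOptAux.prefix_subset w PI _) hPIindep
  · intro t
    have hcle : (S t).card ≤ PI.card :=
      LocalOptAux.card_le_PI hp hγ0 hmono hsub haon hPq hPIsub hPIindep hPImax
        (hsubP t) (hindep t)
    have h1 : AoNIndep γ p (LocalOptAux.prefixF w PI (S t).card) :=
      LocalOptAux.indep_subset hγ0 haon (LocalOptAux.prefix_subset w PI _) hPIindep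
    have hsubP' : LocalOptAux.prefixF w PI (S t).card ⊆ P :=
      (LocalOptAux.prefix_subset w PI _).trans hPIsub
    rw [h1, (hindep t), Finset.sum_congr rfl (fun i hi => hPq i (hsubP' hi)),
      Finset.sum_congr rfl (fun i hi => hPq i (hsubP t hi)),
      Finset.sum_const, Finset.sum_const, LocalOptAux.prefix_card w PI hcle]
  · intro t
    exact LocalOptAux.prefix_le hp hγ0 hmono hsub haon hPq hPIsub hPIindep hPImax w
      hPImin (S t).card (S t) (hsubP t) (hindep t) rfl
end

section
/- (Approximation preservation, mathematical content of Theorem 1) Assume every singleton {i}, i ∈ [n], is independent. For each profit value q occurring among the p_i, let P_I^q be an inclusionwise maximal independent subset of minimum total weight of the profit class P^q = {i ∈ [n] : p_i = q}, and let I* = ∪_q P_I^q. Let α ∈ ℝ with 0 ≤ α ≤ 1, and let 𝒮̄ = (S̄_1, …, S̄_T) be a feasible chain with S̄_T ⊆ I* such that ∑_{t=1}^T Δ_t · ∑_{i ∈ S̄_t} p_i ≥ α · ∑_{t=1}^T Δ_t · ∑_{i ∈ S'_t} p_i for every feasible chain 𝒮' with S'_T ⊆ I*. Then ∑_{t=1}^T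 Δ_t · γ(S̄_t) ≥ α · ∑_{t=1}^T Δ_t · γ(S_t) for every feasible chain 𝒮 = (S_1, …, S_T). -/
set_option linter.unusedSectionVars false
set_option linter.unusedVariables false
set_option maxHeartbeats 1000000


open Finset

section Aux

variable {n : ℕ} (γ : Finset (Fin n) → ℕ) (p : Fin n → ℕ)

variable (hp : ∀ i, 1 ≤ p i)
variable (hγ0 : γ ∅ = 0)
variable (hmono : ∀ S T : Finset (Fin n), S ⊆ T → γ S ≤ γ T)
variable (hsub : ∀ S T : Finset (Fin n), S ⊆ T → ∀ i : Fin n,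
      γ (insert i S) + γ T ≥ γ (insert i T) + γ S)
variable (haon : ∀ (i : Fin n) (S : Finset (Fin n)),
      γ (insert i S) = γ S ∨ γ (insert i S) = γ S + p i)

include hp hsub haon in
lemma full_of_subset {A B : Finset (Fin n)} {i : Fin n} (hAB : A ⊆ B)
    (h : γ (insert i B) = γ B + p i) : γ (insert i A) = γ A + p i := by
  rcases haon i A with h0 | h1
  · have := hsub A B hAB i
    have := hp i
    omega
  · exact h1

include hp hsub haon in
lemma zero_of_superset {A B : Finset (Fin n)} {i : Fin n} (hAB : A ⊆ B)
    (h : γ (insert i A) = γ A) : γ (insert i B) = γ B := by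
  rcases haon i B with h0 | h1
  · exact h0
  · have := full_of_subset γ p hp hsub haon hAB h1
    have := hp i
    omega

include haon in
lemma gamma_union_le (A B : Finset (Fin n)) : γ (A ∪ B) ≤ γ A + ∑ i ∈ B, p i := by
  classical
  induction B using Finset.induction_on with
  | empty => simp
  | insert _ _ hbB =>
    rename_i b B ih
    rw [Finset.union_insert, Finset.sum_insert hbB]
    rcases haon b (A ∪ B) with h0 | h1 <;> omega

include haon hγ0 in
lemma gamma_le_sum (A : Finset (Fin n)) : γ A ≤ ∑ i ∈ A, p i := by
  have := gamma_union_le γ p haon ∅ A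
  simpa [hγ0] using this

include hγ0 haon in
lemma indep_subset {A S : Finset (Fin n)} (h : AoNIndep γ p S) (hAS : A ⊆ S) :
    AoNIndep γ p A := by
  classical
  have h1 : γ A ≤ ∑ i ∈ A, p i := gamma_le_sum γ p hγ0 haon A
  have h2 : γ (A ∪ (S \ A)) ≤ γ A + ∑ i ∈ S \ A, p i := gamma_union_le γ p haon A (S \ A)
  have hu : A ∪ (S \ A) = S := Finset.union_sdiff_of_subset hAS
  have hs : ∑ i ∈ S \ A, p i + ∑ i ∈ A, p i = ∑ i ∈ S, p i := Finset.sum_sdiff hAS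
  unfold AoNIndep at h ⊢
  rw [hu] at h2
  omega

include hp hγ0 hsub haon in
lemma exists_indep_subset (A : Finset (Fin n)) :
    ∃ B ⊆ A, AoNIndep γ p B ∧ γ B = γ A := by
  classical
  induction A using Finset.induction_on with
  | empty => exact ⟨∅, Finset.Subset.refl _, by simp [AoNIndep, hγ0], rfl⟩
  | insert _ _ hiA =>
    rename_i i A ih
    obtain ⟨B, hBA, hBind, hBγ⟩ := ih
    rcases haon i A with h0 | h1
    · exact ⟨B, hBA.trans (Finset.subset_insert _ _), hBind, by rw [hBγ, h0]⟩
    · have hiB : i ∉ B := fun h => hiA (hBA h)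
      have hfull : γ (insert i B) = γ B + p i := full_of_subset γ p hp hsub haon hBA h1
      refine ⟨insert i B, Finset.insert_subset_insert _ hBA, ?_, ?_⟩
      · unfold AoNIndep at hBind ⊢
        rw [hfull, Finset.sum_insert hiB, hBind]; ring
      · rw [hfull, hBγ, h1]

-- continued

include hp hsub haon in
lemma zero_marg_erase {i j : Fin n} {S : Finset (Fin n)} (hij : p i ≠ p j)
    (h : γ (insert i S) = γ S) :
    γ (insert i (S.erase j)) = γ (S.erase j) := by
  classical
  by_cases hjS : j ∈ S
  · rcases haon i (S.erase j) with h0 | h1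
    · exact h0
    · exfalso
      set B := S.erase j with hB
      have hSB : S = insert j B := (Finset.insert_erase hjS).symm
      have hine : i ≠ j := fun e => hij (by rw [e])
      have hcomm : insert i S = insert j (insert i B) := by
        rw [hSB, Finset.insert_comm]
      have h' : γ (insert j (insert i B)) = γ (insert j B) := by
        rw [← hcomm, h, hSB]
      have hpi := hp i; have hpj := hp j
      rcases haon j (insert i B) with a | a <;> rcases haon j B with b | b <;> omega
  · rwa [Finset.erase_eq_of_notMem hjS]

include hp hsub haon in
lemma zero_marg_filter {i : Fin n} {S : Finset (Fin n)} (h : γ (insert i S) = γ S) :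
    γ (insert i (S.filter (fun j => p j = p i))) = γ (S.filter (fun j => p j = p i)) := by
  classical
  induction S using Finset.strongInductionOn with
  | _ S ih =>
    by_cases hfil : S.filter (fun j => p j = p i) = S
    · rwa [hfil]
    · have : ¬ ∀ x ∈ S, p x = p i := fun hall => hfil (Finset.filter_eq_self.2 hall)
      push_neg at this
      obtain ⟨j, hjS, hji⟩ := this
      have h' := zero_marg_erase γ p hp hsub haon (Ne.symm hji) h
      have := ih (S.erase j) (Finset.erase_ssubset hjS) h'
      rw [Finset.filter_erase] at this
      have herase : (S.filter (fun j => p j = p i)).erase j = S.filter (fun j => p j = p i) :=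
        Finset.erase_eq_of_notMem (fun hm => hji (Finset.mem_filter.1 hm).2)
      rwa [herase] at this

include hp hγ0 hsub haon in
lemma gamma_add_union {q : ℕ} {S C : Finset (Fin n)}
    (hC : ∀ i ∈ C, p i = q) (hS : ∀ j ∈ S, p j ≠ q) :
    γ (S ∪ C) = γ S + γ C := by
  classical
  induction C using Finset.induction_on with
  | empty => simp [hγ0]
  | insert _ _ hcC =>
    rename_i c C ih
    have hc : p c = q := hC c (Finset.mem_insert_self _ _)
    have hC' : ∀ i ∈ C, p i = q := fun i hi => hC i (Finset.mem_insert_of_mem hi)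
    have hIH := ih hC'
    rw [Finset.union_insert]
    have hfil : (S ∪ C).filter (fun j => p j = p c) = C := by
      rw [Finset.filter_union]
      have h1 : S.filter (fun j => p j = p c) = ∅ :=
        Finset.filter_eq_empty_iff.2 (fun {x} hx => by rw [hc]; exact hS x hx)
      have h2 : C.filter (fun j => p j = p c) = C :=
        Finset.filter_eq_self.2 (fun x hx => by rw [hc]; exact hC' x hx)
      rw [h1, h2, Finset.empty_union]
    rcases haon c (S ∪ C) with h0 | h1
    · have := zero_marg_filter γ p hp hsub haon h0
      rw [hfil] at this
      omega
    · have hfull : γ (insert c C) = γ C + p c :=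
        full_of_subset γ p hp hsub haon Finset.subset_union_right h1
      omega

include hp hγ0 hsub haon in
lemma gamma_biUnion (Q : Finset ℕ) (C : ℕ → Finset (Fin n))
    (hC : ∀ q ∈ Q, ∀ i ∈ C q, p i = q) :
    γ (Q.biUnion C) = ∑ q ∈ Q, γ (C q) := by
  classical
  induction Q using Finset.induction_on with
  | empty => simp [hγ0]
  | insert _ _ hqQ =>
    rename_i q Q ih
    rw [Finset.biUnion_insert, Finset.sum_insert hqQ, Finset.union_comm]
    rw [gamma_add_union γ p hp hγ0 hsub haon (q := q)
      (hC q (Finset.mem_insert_self _ _))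
      (fun j hj => by
        obtain ⟨q', hq', hjq'⟩ := Finset.mem_biUnion.1 hj
        rw [hC q' (Finset.mem_insert_of_mem hq') j hjq']
        exact fun e => hqQ (e ▸ hq'))]
    rw [ih (fun q' hq' => hC q' (Finset.mem_insert_of_mem hq'))]
    omega

include hp hsub haon in
lemma exists_full_marg {A : Finset (Fin n)} (B : Finset (Fin n)) (h : γ A < γ (A ∪ B)) :
    ∃ b ∈ B, b ∉ A ∧ γ (insert b A) = γ A + p b := by
  classical
  induction B using Finset.induction_on with
  | empty => simp at h
  | insert _ _ hbB =>
    rename_i b B ih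
    rw [Finset.union_insert] at h
    rcases haon b (A ∪ B) with h0 | h1
    · rw [h0] at h
      obtain ⟨b', hb', hb'A, hfull⟩ := ih h
      exact ⟨b', Finset.mem_insert_of_mem hb', hb'A, hfull⟩
    · have hbA : b ∉ A := by
        intro hbA
        have : insert b (A ∪ B) = A ∪ B :=
          Finset.insert_eq_self.2 (Finset.mem_union_left _ hbA)
        rw [this] at h1
        have := hp b; omega
      exact ⟨b, Finset.mem_insert_self _ _, hbA,
        full_of_subset γ p hp hsub haon Finset.subset_union_left h1⟩

include hp hmono hsub haon in
lemma exchange {q : ℕ} (hq : 1 ≤ q) {A B : Finset (Fin n)}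
    (hA : ∀ i ∈ A, p i = q) (hB : ∀ i ∈ B, p i = q)
    (hAi : AoNIndep γ p A) (hBi : AoNIndep γ p B) (hcard : A.card < B.card) :
    ∃ b ∈ B, b ∉ A ∧ AoNIndep γ p (insert b A) := by
  classical
  have hgA : γ A = A.card * q := by
    rw [hAi, Finset.sum_congr rfl (fun i hi => hA i hi), Finset.sum_const, smul_eq_mul]
  have hgB : γ B = B.card * q := by
    rw [hBi, Finset.sum_congr rfl (fun i hi => hB i hi), Finset.sum_const, smul_eq_mul]
  have hlt : γ A < γ (A ∪ B) := by
    have h1 : γ B ≤ γ (A ∪ B) := hmono _ _ Finset.subset_union_right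
    have h2 : A.card * q < B.card * q := by
      exact Nat.mul_lt_mul_of_lt_of_le hcard (le_refl q) hq
    omega
  obtain ⟨b, hbB, hbA, hfull⟩ := exists_full_marg γ p hp hsub haon B hlt
  refine ⟨b, hbB, hbA, ?_⟩
  unfold AoNIndep at hAi ⊢
  rw [hfull, Finset.sum_insert hbA, hAi]; ring

include hp hmono hsub haon in
lemma card_le_basis {q : ℕ} (hq : 1 ≤ q) {M A : Finset (Fin n)}
    (hMc : ∀ i ∈ M, p i = q) (hMi : AoNIndep γ p M)
    (hMmax : ∀ B : Finset (Fin n),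
      B ⊆ Finset.univ.filter (fun i => p i = q) → AoNIndep γ p B → M ⊆ B → M = B)
    (hAc : ∀ i ∈ A, p i = q) (hAi : AoNIndep γ p A) : A.card ≤ M.card := by
  classical
  by_contra hcon
  push_neg at hcon
  obtain ⟨b, hbA, hbM, hind⟩ := exchange γ p hp hmono hsub haon hq hMc hAc hMi hAi hcon
  have := hMmax (insert b M)
    (by
      intro x hx
      rcases Finset.mem_insert.1 hx with rfl | hx
      · exact Finset.mem_filter.2 ⟨Finset.mem_univ _, hAc _ hbA⟩
      · exact Finset.mem_filter.2 ⟨Finset.mem_univ _, hMc _ hx⟩)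
    hind (Finset.subset_insert _ _)
  exact hbM (this ▸ Finset.mem_insert_self b M)

include hp hmono hsub haon in
lemma extend_to_basis {q : ℕ} (hq : 1 ≤ q) {M : Finset (Fin n)}
    (hMc : ∀ i ∈ M, p i = q) (hMi : AoNIndep γ p M)
    (hMmax : ∀ B : Finset (Fin n),
      B ⊆ Finset.univ.filter (fun i => p i = q) → AoNIndep γ p B → M ⊆ B → M = B) :
    ∀ d (A : Finset (Fin n)), (∀ i ∈ A, p i = q) → AoNIndep γ p A →
      M.card - A.card ≤ d →
      ∃ B : Finset (Fin n), A ⊆ B ∧ B ⊆ A ∪ M ∧ (∀ i ∈ B, p i = q) ∧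
        AoNIndep γ p B ∧ B.card = M.card := by
  classical
  intro d
  induction d with
  | zero =>
    intro A hAc hAi hd
    have h1 : A.card ≤ M.card := card_le_basis γ p hp hmono hsub haon hq hMc hMi hMmax hAc hAi
    exact ⟨A, Finset.Subset.refl _, Finset.subset_union_left, hAc, hAi, by omega⟩
  | succ d ih =>
    intro A hAc hAi hd
    by_cases hcase : M.card ≤ A.card
    · have h1 : A.card ≤ M.card := card_le_basis γ p hp hmono hsub haon hq hMc hMi hMmax hAc hAi
      exact ⟨A, Finset.Subset.refl _, Finset.subset_union_left, hAc, hAi, by omega⟩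
    · push_neg at hcase
      obtain ⟨b, hbM, hbA, hind⟩ := exchange γ p hp hmono hsub haon hq hAc hMc hAi hMi hcase
      have hbc : ∀ i ∈ insert b A, p i = q := by
        intro x hx
        rcases Finset.mem_insert.1 hx with rfl | hx
        · exact hMc _ hbM
        · exact hAc _ hx
      have hcard : (insert b A).card = A.card + 1 := Finset.card_insert_of_notMem hbA
      obtain ⟨B, h1, h2, h3, h4, h5⟩ := ih (insert b A) hbc hind (by omega)
      refine ⟨B, (Finset.subset_insert _ _).trans h1, ?_, h3, h4, h5⟩
      intro x hx
      rcases Finset.mem_union.1 (h2 hx) with hx' | hx'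
      · rcases Finset.mem_insert.1 hx' with rfl | hx''
        · exact Finset.mem_union_right _ hbM
        · exact Finset.mem_union_left _ hx''
      · exact Finset.mem_union_right _ hx'

end Aux


section PrefixSec

variable {n : ℕ} (w : Fin n → ℕ)

/-- tie-broken weight order -/
def wr (i j : Fin n) : Prop := w i < w j ∨ (w i = w j ∧ (i : ℕ) ≤ (j : ℕ))

instance wr_trans : IsTrans (Fin n) (wr w) := by
  constructor; intro a b c h1 h2; unfold wr at *; omega

instance wr_antisymm : IsAntisymm (Fin n) (wr w) := by
  constructor; intro a b h1 h2
  have : (a : ℕ) = (b : ℕ) := by unfold wr at *; omega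
  exact Fin.ext this

instance wr_total : IsTotal (Fin n) (wr w) := by
  constructor; intro a b; unfold wr; omega

instance wr_dec : DecidableRel (wr w) := fun i j => by unfold wr; exact inferInstance

/-- the `k` lightest elements of `M` -/
def Ew (M : Finset (Fin n)) (k : ℕ) : Finset (Fin n) :=
  ((M.sort (wr w)).take k).toFinset

lemma Ew_subset (M : Finset (Fin n)) (k : ℕ) : Ew w M k ⊆ M := by
  intro x hx
  have := List.take_subset k (M.sort (wr w)) (List.mem_toFinset.1 hx)
  exact (Finset.mem_sort (wr w)).1 this

lemma Ew_mono (M : Finset (Fin n)) {k k' : ℕ} (h : k ≤ k') : Ew w M k ⊆ Ew w M k' := by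
  intro x hx
  apply List.mem_toFinset.2
  have := List.mem_toFinset.1 hx
  rw [show (M.sort (wr w)).take k = ((M.sort (wr w)).take k').take k by
    rw [List.take_take, min_eq_left h]] at this
  exact List.take_subset _ _ this

lemma Ew_card (M : Finset (Fin n)) (k : ℕ) : (Ew w M k).card = min k M.card := by
  rw [Ew, List.toFinset_card_of_nodup
    ((M.sort_nodup (wr w)).sublist (List.take_sublist k _))]
  rw [List.length_take, Finset.length_sort]

lemma Ew_succ (M : Finset (Fin n)) {k : ℕ} (hk : k < M.card) :
    ∃ e, e ∉ Ew w M k ∧ Ew w M (k + 1) = insert e (Ew w M k) ∧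
      (∀ x ∈ M, x ∉ Ew w M k → w e ≤ w x) := by
  set l := M.sort (wr w) with hl
  have hlen : k < l.length := by rw [hl, Finset.length_sort]; exact hk
  refine ⟨l[k], ?_, ?_, ?_⟩
  case refine_2 =>
    show (l.take (k+1)).toFinset = _
    rw [List.take_succ, List.getElem?_eq_getElem hlen]
    show (l.take k ++ [l[k]]).toFinset = _
    rw [List.toFinset_append]
    show _ ∪ [l[k]].toFinset = _
    rw [show ([l[k]] : List (Fin n)).toFinset = {l[k]} by simp]
    rw [Finset.union_comm]
    exact (Finset.insert_eq _ _).symm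
  case refine_1 =>
    intro hmem
    have h1 : (Ew w M (k+1)).card = k + 1 := by rw [Ew_card]; omega
    have h2 : (Ew w M k).card = k := by rw [Ew_card]; omega
    have h3 : Ew w M (k+1) = insert l[k] (Ew w M k) := by
      show (l.take (k+1)).toFinset = _
      rw [List.take_succ, List.getElem?_eq_getElem hlen]
      show (l.take k ++ [l[k]]).toFinset = _
      rw [List.toFinset_append, show ([l[k]] : List (Fin n)).toFinset = {l[k]} by simp,
        Finset.union_comm]
      exact (Finset.insert_eq _ _).symm
    rw [h3, Finset.insert_eq_self.2 hmem] at h1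
    omega
  case refine_3 =>
    intro x hxM hxE
    have hxl : x ∈ l := (Finset.mem_sort (wr w)).2 hxM
    obtain ⟨⟨j, hj⟩, hget⟩ := List.mem_iff_get.1 hxl
    simp only [List.get_eq_getElem] at hget
    rcases lt_trichotomy j k with hlt | heq | hgt
    · exfalso
      apply hxE
      apply List.mem_toFinset.2
      have h2 : (l.take k)[j]'(by rw [List.length_take]; omega) = l[j] :=
        List.getElem_take
      rw [← hget, ← h2]
      exact List.getElem_mem _
    · subst heq; rw [hget]
    · have hs := (M.pairwise_sort (wr w)).rel_get_of_lt
        (a := ⟨k, hlen⟩) (b := ⟨j, hj⟩) (by exact hgt)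
      simp only [List.get_eq_getElem] at hs
      have hs' : wr w l[k] l[j] := hs
      rw [← hget]
      unfold wr at hs'
      omega

end PrefixSec

section KeyWeight

variable {n : ℕ} (γ : Finset (Fin n) → ℕ) (p w : Fin n → ℕ)
variable (hp : ∀ i, 1 ≤ p i)
variable (hγ0 : γ ∅ = 0)
variable (hmono : ∀ S T : Finset (Fin n), S ⊆ T → γ S ≤ γ T)
variable (hsub : ∀ S T : Finset (Fin n), S ⊆ T → ∀ i : Fin n,
      γ (insert i S) + γ T ≥ γ (insert i T) + γ S)
variable (haon : ∀ (i : Fin n) (S : Finset (Fin n)),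
      γ (insert i S) = γ S ∨ γ (insert i S) = γ S + p i)

include hp hγ0 hmono hsub haon in
lemma prefix_weight_le {q : ℕ} (hq : 1 ≤ q) {M : Finset (Fin n)}
    (hMc : ∀ i ∈ M, p i = q) (hMi : AoNIndep γ p M)
    (hMmax : ∀ B : Finset (Fin n),
      B ⊆ Finset.univ.filter (fun i => p i = q) → AoNIndep γ p B → M ⊆ B → M = B)
    (hMmin : ∀ B : Finset (Fin n),
      B ⊆ Finset.univ.filter (fun i => p i = q) → AoNIndep γ p B →
      (∀ C : Finset (Fin n), C ⊆ Finset.univ.filter (fun i => p i = q) →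
        AoNIndep γ p C → B ⊆ C → B = C) →
      ∑ i ∈ M, w i ≤ ∑ i ∈ B, w i) :
    ∀ (k : ℕ) (A : Finset (Fin n)), (∀ i ∈ A, p i = q) → AoNIndep γ p A → A.card = k →
      ∑ i ∈ Ew w M k, w i ≤ ∑ i ∈ A, w i := by
  classical
  intro k
  induction k with
  | zero => intro A _ _ _; simp [Ew]
  | succ k ih =>
    intro A hAc hAi hAcard
    have hAne : A.Nonempty := Finset.card_pos.1 (by omega)
    obtain ⟨a, haA, hamax⟩ := Finset.exists_max_image A w hAne
    set A' := A.erase a with hA'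
    have hA'card : A'.card = k := by rw [hA', Finset.card_erase_of_mem haA]; omega
    have hA'c : ∀ i ∈ A', p i = q := fun i hi => hAc i (Finset.erase_subset _ _ hi)
    have hA'i : AoNIndep γ p A' :=
      indep_subset γ p hγ0 haon hAi (Finset.erase_subset _ _)
    have hIH := ih A' hA'c hA'i hA'card
    have hAM : A.card ≤ M.card :=
      card_le_basis γ p hp hmono hsub haon hq hMc hMi hMmax hAc hAi
    have hkM : k < M.card := by omega
    obtain ⟨e, heE, hEsucc, hewle⟩ := Ew_succ w M hkM
    have hwe : w e ≤ w a := by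
      by_contra hcon
      push_neg at hcon
      set Ek := Ew w M k with hEk
      have hEkcard : Ek.card = k := by rw [hEk, Ew_card]; omega
      have hEksub : Ek ⊆ M := Ew_subset w M k
      have hEkc : ∀ i ∈ Ek, p i = q := fun i hi => hMc i (hEksub hi)
      have hEki : AoNIndep γ p Ek := indep_subset γ p hγ0 haon hMi hEksub
      obtain ⟨b, hbA, hbEk, hbind⟩ :=
        exchange γ p hp hmono hsub haon hq hEkc hAc hEki hAi (by omega)
      have hba : w b ≤ w a := hamax b hbA
      have hbM : b ∉ M := by
        intro hbM
        have := hewle b hbM hbEk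
        omega
      have hbEkc : ∀ i ∈ insert b Ek, p i = q := by
        intro x hx
        rcases Finset.mem_insert.1 hx with rfl | hx
        · exact hAc _ hbA
        · exact hEkc _ hx
      obtain ⟨B, hsubB, hBsub, hBc, hBi, hBcard⟩ :=
        extend_to_basis γ p hp hmono hsub haon hq hMc hMi hMmax M.card
          (insert b Ek) hbEkc hbind (Nat.sub_le _ _)
      have hBmax : ∀ C : Finset (Fin n),
          C ⊆ Finset.univ.filter (fun i => p i = q) → AoNIndep γ p C → B ⊆ C → B = C := by
        intro C hCf hCi hBC
        have hCc : ∀ i ∈ C, p i = q := fun i hi => (Finset.mem_filter.1 (hCf hi)).2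
        have : C.card ≤ M.card :=
          card_le_basis γ p hp hmono hsub haon hq hMc hMi hMmax hCc hCi
        exact Finset.eq_of_subset_of_card_le hBC (by omega)
      have hMB : ∑ i ∈ M, w i ≤ ∑ i ∈ B, w i :=
        hMmin B (fun i hi => Finset.mem_filter.2 ⟨Finset.mem_univ _, hBc i hi⟩) hBi hBmax
      set D := B \ insert b Ek with hD
      have hsum1 : ∑ i ∈ D, w i + ∑ i ∈ insert b Ek, w i = ∑ i ∈ B, w i :=
        Finset.sum_sdiff hsubB
      have hsum2 : ∑ i ∈ insert b Ek, w i = w b + ∑ i ∈ Ek, w i :=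
        Finset.sum_insert hbEk
      have hDsub : D ⊆ M \ Ek := by
        intro x hx
        obtain ⟨hxB, hxn⟩ := Finset.mem_sdiff.1 hx
        rcases Finset.mem_union.1 (hBsub hxB) with h' | h'
        · exact absurd h' hxn
        · exact Finset.mem_sdiff.2 ⟨h', fun hc => hxn (Finset.mem_insert_of_mem hc)⟩
      have hnsub : ¬ (M \ Ek ⊆ D) := by
        intro hc
        have h1 := Finset.card_le_card hc
        have h2 : D.card = B.card - (k + 1) := by
          rw [hD, Finset.card_sdiff_of_subset hsubB, Finset.card_insert_of_notMem hbEk, hEkcard]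
        have h3 : (M \ Ek).card = M.card - k := by
          rw [Finset.card_sdiff_of_subset hEksub, hEkcard]
        omega
      obtain ⟨x, hxmem, hxD⟩ := Finset.not_subset.1 hnsub
      have hxw : w e ≤ w x :=
        hewle x (Finset.mem_sdiff.1 hxmem).1 (Finset.mem_sdiff.1 hxmem).2
      have hsum3 : w x + ∑ i ∈ D, w i ≤ ∑ i ∈ M \ Ek, w i := by
        rw [← Finset.sum_insert hxD]
        exact Finset.sum_le_sum_of_subset (Finset.insert_subset hxmem hDsub)
      have hsum4 : ∑ i ∈ M \ Ek, w i + ∑ i ∈ Ek, w i = ∑ i ∈ M, w i :=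
        Finset.sum_sdiff hEksub
      omega
    rw [hEsucc, Finset.sum_insert heE]
    have hfin : w a + ∑ i ∈ A', w i = ∑ i ∈ A, w i := by
      rw [hA']
      exact Finset.add_sum_erase A w haA
    omega

end KeyWeight

theorem approximation_preservation {n T : ℕ} (γ : Finset (Fin n) → ℕ)
    (p w : Fin n → ℕ) (W Δ : Fin T → ℕ)
    (hW : Monotone W)
    (hp : ∀ i, 1 ≤ p i)
    (hγ0 : γ ∅ = 0)
    (hmono : ∀ S T : Finset (Fin n), S ⊆ T → γ S ≤ γ T)
    (hsub : ∀ S T : Finset (Fin n), S ⊆ T → ∀ i : Fin n,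
      γ (insert i S) + γ T ≥ γ (insert i T) + γ S)
    (haon : ∀ (i : Fin n) (S : Finset (Fin n)),
      γ (insert i S) = γ S ∨ γ (insert i S) = γ S + p i)
    (hsingle : ∀ i : Fin n, AoNIndep γ p {i})
    -- `PI q` is an inclusionwise maximal independent subset of minimum total
    -- weight of the profit class `{i : p i = q}`, for each occurring value `q`
    (PI : ℕ → Finset (Fin n))
    (hPIsub : ∀ q ∈ Finset.univ.image p, PI q ⊆ Finset.univ.filter (fun i => p i = q))
    (hPIindep : ∀ q ∈ Finset.univ.image p, AoNIndep γ p (PI q))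
    (hPImax : ∀ q ∈ Finset.univ.image p, ∀ B : Finset (Fin n),
      B ⊆ Finset.univ.filter (fun i => p i = q) → AoNIndep γ p B → PI q ⊆ B → PI q = B)
    (hPImin : ∀ q ∈ Finset.univ.image p, ∀ B : Finset (Fin n),
      B ⊆ Finset.univ.filter (fun i => p i = q) → AoNIndep γ p B →
      (∀ C : Finset (Fin n), C ⊆ Finset.univ.filter (fun i => p i = q) →
        AoNIndep γ p C → B ⊆ C → B = C) →
      ∑ i ∈ PI q, w i ≤ ∑ i ∈ B, w i)
    (Istar : Finset (Fin n)) (hIstar : Istar = (Finset.univ.image p).biUnion PI)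
    (α : ℝ) (hα0 : 0 ≤ α) (hα1 : α ≤ 1)
    -- `Sbar` is a feasible chain inside I* that is an α-approximation of the
    -- modularized problem restricted to I*
    (Sbar : Fin T → Finset (Fin n))
    (hSbarchain : Monotone Sbar)
    (hSbarfeas : ∀ t, ∑ i ∈ Sbar t, w i ≤ W t)
    (hSbarsub : ∀ t, Sbar t ⊆ Istar)
    (hSbarapx : ∀ S' : Fin T → Finset (Fin n), Monotone S' →
      (∀ t, ∑ i ∈ S' t, w i ≤ W t) → (∀ t, S' t ⊆ Istar) →
      (∑ t, (Δ t : ℝ) * ∑ i ∈ Sbar t, (p i : ℝ)) ≥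
        α * ∑ t, (Δ t : ℝ) * ∑ i ∈ S' t, (p i : ℝ)) :
    -- then `Sbar` is an α-approximation of the original problem
    ∀ S : Fin T → Finset (Fin n), Monotone S → (∀ t, ∑ i ∈ S t, w i ≤ W t) →
      (∑ t, (Δ t : ℝ) * (γ (Sbar t) : ℝ)) ≥ α * ∑ t, (Δ t : ℝ) * (γ (S t) : ℝ) := by
  classical
  intro S hSmono hSfeas
  have himg : ∀ q ∈ Finset.univ.image p, 1 ≤ q := by
    intro q hq
    obtain ⟨i, _, rfl⟩ := Finset.mem_image.1 hq
    exact hp i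
  have hPIc : ∀ q ∈ Finset.univ.image p, ∀ i ∈ PI q, p i = q :=
    fun q hq i hi => (Finset.mem_filter.1 (hPIsub q hq hi)).2
  -- I* is independent
  have hdisjPI : (↑(Finset.univ.image p) : Set ℕ).PairwiseDisjoint PI := by
    intro q1 h1 q2 h2 hne
    show Disjoint (PI q1) (PI q2)
    rw [Finset.disjoint_left]
    intro i hi1 hi2
    exact hne ((hPIc q1 (by exact_mod_cast h1) i hi1) ▸ (hPIc q2 (by exact_mod_cast h2) i hi2) ▸ rfl)
  have hIind : AoNIndep γ p Istar := by
    unfold AoNIndep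
    rw [hIstar, gamma_biUnion γ p hp hγ0 hsub haon _ _ hPIc, Finset.sum_biUnion hdisjPI]
    exact Finset.sum_congr rfl (fun q hq => hPIindep q hq)
  have hSbarind : ∀ t, γ (Sbar t) = ∑ i ∈ Sbar t, p i := fun t =>
    indep_subset γ p hγ0 haon hIind (hSbarsub t)
  -- the surrogate chain
  set kk : Fin T → ℕ → ℕ := fun t q => γ ((S t).filter (fun i => p i = q)) / q with hkk
  set S' : Fin T → Finset (Fin n) :=
    fun t => (Finset.univ.image p).biUnion (fun q => Ew w (PI q) (kk t q)) with hS'def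
  have hkey : ∀ t, ∀ q ∈ Finset.univ.image p,
      γ ((S t).filter (fun i => p i = q)) = q * kk t q ∧ kk t q ≤ (PI q).card ∧
      ∑ i ∈ Ew w (PI q) (kk t q), w i ≤ ∑ i ∈ (S t).filter (fun i => p i = q), w i := by
    intro t q hq
    have hq1 := himg q hq
    obtain ⟨A, hAsub, hAind, hAγ⟩ :=
      exists_indep_subset γ p hp hγ0 hsub haon ((S t).filter (fun i => p i = q))
    have hAc : ∀ i ∈ A, p i = q := fun i hi => (Finset.mem_filter.1 (hAsub hi)).2
    have hγA : γ A = q * A.card := by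
      rw [hAind, Finset.sum_congr rfl hAc, Finset.sum_const, smul_eq_mul, Nat.mul_comm]
    have hγfil : γ ((S t).filter (fun i => p i = q)) = q * A.card := by omega
    have hkkval : kk t q = A.card := by
      rw [hkk]
      simp only
      rw [hγfil]
      exact Nat.mul_div_cancel_left _ hq1
    refine ⟨by rw [hkkval]; exact hγfil, ?_, ?_⟩
    · rw [hkkval]
      exact card_le_basis γ p hp hmono hsub haon hq1 (hPIc q hq) (hPIindep q hq)
        (hPImax q hq) hAc hAind
    · rw [hkkval]
      calc ∑ i ∈ Ew w (PI q) A.card, w i ≤ ∑ i ∈ A, w i :=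
            prefix_weight_le γ p w hp hγ0 hmono hsub haon hq1 (hPIc q hq) (hPIindep q hq)
              (hPImax q hq) (hPImin q hq) A.card A hAc hAind rfl
        _ ≤ ∑ i ∈ (S t).filter (fun i => p i = q), w i :=
            Finset.sum_le_sum_of_subset hAsub
  have hSdecomp : ∀ t,
      (Finset.univ.image p).biUnion (fun q => (S t).filter (fun i => p i = q)) = S t := by
    intro t
    ext i
    constructor
    · intro hi
      obtain ⟨q, _, hi⟩ := Finset.mem_biUnion.1 hi
      exact (Finset.mem_filter.1 hi).1
    · intro hi
      exact Finset.mem_biUnion.2 ⟨p i, Finset.mem_image_of_mem p (Finset.mem_univ i),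
        Finset.mem_filter.2 ⟨hi, rfl⟩⟩
  have hdisjFil : ∀ t, (↑(Finset.univ.image p) : Set ℕ).PairwiseDisjoint
      (fun q => (S t).filter (fun i => p i = q)) := by
    intro t q1 h1 q2 h2 hne
    show Disjoint ((S t).filter (fun i => p i = q1)) ((S t).filter (fun i => p i = q2))
    rw [Finset.disjoint_left]
    intro i hi1 hi2
    exact hne ((Finset.mem_filter.1 hi1).2 ▸ (Finset.mem_filter.1 hi2).2 ▸ rfl)
  have hdisjE : ∀ t, (↑(Finset.univ.image p) : Set ℕ).PairwiseDisjoint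
      (fun q => Ew w (PI q) (kk t q)) := by
    intro t q1 h1 q2 h2 hne
    have := hdisjPI h1 h2 hne
    show Disjoint (Ew w (PI q1) (kk t q1)) (Ew w (PI q2) (kk t q2))
    exact this.mono (Ew_subset w (PI q1) _) (Ew_subset w (PI q2) _)
  have hγS : ∀ t, γ (S t) = ∑ q ∈ Finset.univ.image p, γ ((S t).filter (fun i => p i = q)) := by
    intro t
    conv_lhs => rw [← hSdecomp t]
    exact gamma_biUnion γ p hp hγ0 hsub haon _ _ (fun q hq i hi => (Finset.mem_filter.1 hi).2)
  have hprofit : ∀ t, ∑ i ∈ S' t, p i = γ (S t) := by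
    intro t
    rw [hS'def]
    simp only
    rw [Finset.sum_biUnion (hdisjE t), hγS t]
    refine Finset.sum_congr rfl (fun q hq => ?_)
    have hEc : ∀ i ∈ Ew w (PI q) (kk t q), p i = q :=
      fun i hi => hPIc q hq i (Ew_subset w (PI q) _ hi)
    rw [Finset.sum_congr rfl hEc, Finset.sum_const, smul_eq_mul, Ew_card,
      min_eq_left (hkey t q hq).2.1, (hkey t q hq).1, Nat.mul_comm]
  have hweight : ∀ t, ∑ i ∈ S' t, w i ≤ W t := by
    intro t
    rw [hS'def]
    simp only
    rw [Finset.sum_biUnion (hdisjE t)]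
    calc ∑ q ∈ Finset.univ.image p, ∑ i ∈ Ew w (PI q) (kk t q), w i
        ≤ ∑ q ∈ Finset.univ.image p, ∑ i ∈ (S t).filter (fun i => p i = q), w i :=
          Finset.sum_le_sum (fun q hq => (hkey t q hq).2.2)
      _ = ∑ i ∈ S t, w i := by rw [← Finset.sum_biUnion (hdisjFil t), hSdecomp t]
      _ ≤ W t := hSfeas t
  have hS'mono : Monotone S' := by
    intro t t' htt'
    rw [hS'def]
    simp only
    intro x hx
    obtain ⟨q, hq, hxE⟩ := Finset.mem_biUnion.1 hx
    refine Finset.mem_biUnion.2 ⟨q, hq, ?_⟩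
    refine Ew_mono w (PI q) ?_ hxE
    exact Nat.div_le_div_right (hmono _ _ (Finset.filter_subset_filter _ (hSmono htt')))
  have hS'sub : ∀ t, S' t ⊆ Istar := by
    intro t x hx
    obtain ⟨q, hq, hxE⟩ := Finset.mem_biUnion.1 hx
    rw [hIstar]
    exact Finset.mem_biUnion.2 ⟨q, hq, Ew_subset w (PI q) _ hxE⟩
  have happ := hSbarapx S' hS'mono hweight hS'sub
  have hL : (∑ t, (Δ t : ℝ) * (γ (Sbar t) : ℝ)) =
      ∑ t, (Δ t : ℝ) * ∑ i ∈ Sbar t, (p i : ℝ) := by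
    refine Finset.sum_congr rfl (fun t _ => ?_)
    rw [hSbarind t]
    push_cast
    ring
  have hR : (∑ t, (Δ t : ℝ) * ∑ i ∈ S' t, (p i : ℝ)) =
      ∑ t, (Δ t : ℝ) * (γ (S t) : ℝ) := by
    refine Finset.sum_congr rfl (fun t _ => ?_)
    rw [← hprofit t]
    push_cast
    ring
  rw [hL, ← hR]
  exact happ
end

section
/- Let S, S' be independent sets all of whose items have the same profit q (i.e., p_i = q for every i ∈ S ∪ S'), with |S| > |S'|. Then γ(S ∪ S') > γ(S'). -/
open Finset

theorem gamma_union_gt {n : ℕ} (γ : Finset (Fin n) → ℕ) (p : Fin n → ℕ)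
    (hp : ∀ i, 1 ≤ p i)
    (hγ0 : γ ∅ = 0)
    (hmono : ∀ S T : Finset (Fin n), S ⊆ T → γ S ≤ γ T)
    (hsub : ∀ S T : Finset (Fin n), S ⊆ T → ∀ i : Fin n,
      γ (insert i S) + γ T ≥ γ (insert i T) + γ S)
    (haon : ∀ (i : Fin n) (S : Finset (Fin n)),
      γ (insert i S) = γ S ∨ γ (insert i S) = γ S + p i)
    (q : ℕ) (S S' : Finset (Fin n))
    (hS : AoNIndep γ p S) (hS' : AoNIndep γ p S')
    (hq : ∀ i ∈ S ∪ S', p i = q)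
    (hcard : S'.card < S.card) :
    γ S' < γ (S ∪ S') := by
  have hSq : γ S = S.card * q := by
    rw [hS, Finset.sum_congr rfl (fun i hi => hq i (Finset.mem_union_left _ hi))]
    simp [mul_comm]
  have hS'q : γ S' = S'.card * q := by
    rw [hS', Finset.sum_congr rfl (fun i hi => hq i (Finset.mem_union_right _ hi))]
    simp [mul_comm]
  have hqpos : 1 ≤ q := by
    obtain ⟨i, hi⟩ := Finset.card_pos.mp (Nat.lt_of_le_of_lt (Nat.zero_le _) hcard)
    calc 1 ≤ p i := hp i
    _ = q := hq i (Finset.mem_union_left _ hi)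
  calc γ S' = S'.card * q := hS'q
    _ < S.card * q := by exact Nat.mul_lt_mul_of_lt_of_le hcard le_rfl hqpos
    _ = γ S := hSq.symm
    _ ≤ γ (S ∪ S') := hmono _ _ Finset.subset_union_left
end
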